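/- arXiv:2109.13475 — 8 statements merged into one kernel-verified Lean document; each statement's English description precedes it below -/
import Mathlib

section
/- Let L be a graph and s a nonnegative integer. There is a 2-star decomposition of the join L ∨ K_s if and only if either (i) s = 0 and each connected component of L has an even number of edges, or (ii) s ≥ 1 and |E(L ∨ K_s)| is even. -/
/-- The star with centre `c` and leaf set `Lf` is a `k`-star in `G`. -/
def IsStarIn {V : Type*} (G : SimpleGraph V) (k : ℕ) (c : V) (Lf : Finset V) : Prop :=
  Lf.card = k ∧ ∀ v ∈ Lf, G.Adj c v

/-- The edge set of the star with centre `c` and leaf set `Lf`. -/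
def starEdges {V : Type*} [DecidableEq V] (c : V) (Lf : Finset V) : Finset (Sym2 V) :=
  Lf.image (fun v => s(c, v))

/-- A partial `k`-star decomposition of `G`: a set of `k`-stars of `G` whose edge sets are
pairwise disjoint. -/
def IsPartialStarDecompOn {V : Type*} [DecidableEq V] (G : SimpleGraph V) (k : ℕ)
    (D : Finset (V × Finset V)) : Prop :=
  (∀ p ∈ D, IsStarIn G k p.1 p.2) ∧
  (∀ p ∈ D, ∀ q ∈ D, p ≠ q → Disjoint (starEdges p.1 p.2) (starEdges q.1 q.2))

/-- A `k`-star decomposition of `G`: a partial one whose stars' edge sets cover `E(G)`. -/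
def IsStarDecompOn {V : Type*} [DecidableEq V] (G : SimpleGraph V) (k : ℕ)
    (D : Finset (V × Finset V)) : Prop :=
  IsPartialStarDecompOn G k D ∧ ∀ e ∈ G.edgeSet, ∃ p ∈ D, e ∈ starEdges p.1 p.2

/-- The leave of a partial star decomposition `D` of `G`: the graph on `V(G)` consisting of
the edges of `G` lying in no star of `D`. -/
def leaveOf {V : Type*} [DecidableEq V] (G : SimpleGraph V) (D : Finset (V × Finset V)) :
    SimpleGraph V :=
  G.deleteEdges ↑(D.biUnion fun p => starEdges p.1 p.2)

/-- The join `L ∨ K_s` of `L` with a complete graph on `s` new vertices. -/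
def joinK {V : Type*} (L : SimpleGraph V) (s : ℕ) : SimpleGraph (V ⊕ Fin s) where
  Adj x y := x ≠ y ∧ ∀ a b, x = Sum.inl a → y = Sum.inl b → L.Adj a b
  symm := by
    constructor
    rintro x y ⟨hxy, h⟩
    exact ⟨hxy.symm, fun a b ha hb => (h b a hb ha).symm⟩
  loopless := by constructor; rintro x ⟨h, -⟩; exact h rfl

/-- The independence number `α(L)` of a graph `L`. -/
noncomputable def indepNumber {V : Type*} [Fintype V] (L : SimpleGraph V) : ℕ :=
  sSup {m : ℕ | ∃ t : Finset V, t.card = m ∧ ∀ x ∈ t, ∀ y ∈ t, x ≠ y → ¬ L.Adj x y}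

/-- Push a star on `Fin n` forward to `Fin N` along the canonical inclusion. -/
def castStar {n N : ℕ} (h : n ≤ N) (p : Fin n × Finset (Fin n)) :
    Fin N × Finset (Fin N) :=
  (Fin.castLE h p.1, p.2.image (Fin.castLE h))

/-- The partial `k`-star decomposition `A` of `K_n` can be embedded in a `k`-star
decomposition of `K_{n+s}`. -/
def EmbedsIn (k n s : ℕ) (A : Finset (Fin n × Finset (Fin n))) : Prop :=
  ∃ B : Finset (Fin (n + s) × Finset (Fin (n + s))),
    IsStarDecompOn (⊤ : SimpleGraph (Fin (n + s))) k B ∧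
    A.image (castStar (Nat.le_add_right n s)) ⊆ B

/-- `Δ_T = |E_T| - k·∑_{x∈T} γ(x)`, where `E_T` is the set of edges of `G` incident with at
least one vertex of `T`. -/
noncomputable def starDelta {V : Type*} (G : SimpleGraph V) (k : ℕ) (γ : V → ℕ)
    (T : Finset V) : ℤ :=
  ({e ∈ G.edgeSet | ∃ v ∈ T, v ∈ e}.ncard : ℤ) - k * ∑ x ∈ T, γ x


/-! ### Auxiliary development for `stmt3` -/

section StarDecompAux

open SimpleGraph

variable {W : Type*} [DecidableEq W]

lemma edge_endpoint' {G : SimpleGraph W} {e : Sym2 W} (he : e ∈ G.edgeSet) {x : W}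
    (hx : x ∈ e) : ∃ y, G.Adj x y ∧ e = s(x, y) := by
  induction e with
  | _ p q =>
    rw [Sym2.mem_iff] at hx
    rcases hx with rfl | rfl
    · exact ⟨q, he, rfl⟩
    · exact ⟨p, ((SimpleGraph.mem_edgeSet _).mp he).symm, Sym2.eq_swap.symm⟩

lemma dist_decomp_of_mem_support' {G : SimpleGraph W} {r w : W} (p : G.Walk r w)
    (hp : p.length = G.dist r w) {x : W} (hx : x ∈ p.support) :
    G.dist r x + G.dist x w = G.dist r w := by
  have h1 : G.dist r x ≤ (p.takeUntil x hx).length := SimpleGraph.dist_le _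
  have h2 : G.dist x w ≤ (p.dropUntil x hx).length := SimpleGraph.dist_le _
  have h3 : (p.takeUntil x hx).length + (p.dropUntil x hx).length = p.length := by
    rw [← SimpleGraph.Walk.length_append, p.take_spec hx]
  have h4 : G.dist r w ≤ G.dist r x + G.dist x w := by
    obtain ⟨q1, hq1⟩ := SimpleGraph.Reachable.exists_walk_length_eq_dist (⟨p.takeUntil x hx⟩ : G.Reachable r x)
    obtain ⟨q2, hq2⟩ := SimpleGraph.Reachable.exists_walk_length_eq_dist (⟨p.dropUntil x hx⟩ : G.Reachable x w)
    calc G.dist r w ≤ (q1.append q2).length := SimpleGraph.dist_le _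
    _ = G.dist r x + G.dist x w := by rw [SimpleGraph.Walk.length_append, hq1, hq2]
  omega

lemma not_mem_edge_of_not_mem_support' {G : SimpleGraph W} {a b c : W} (p : G.Walk a b)
    (hc : c ∉ p.support) {e : Sym2 W} (he : e ∈ p.edges) : c ∉ e := by
  intro hce
  obtain ⟨y, -, rfl⟩ := edge_endpoint' (p.edges_subset_edgeSet he) hce
  exact hc (p.fst_mem_support_of_mem_edges he)

lemma reachable_delete_of_avoid' {G : SimpleGraph W} {a b : W} (p : G.Walk a b)
    {Erm : Set (Sym2 W)} (h : ∀ e ∈ p.edges, e ∉ Erm) :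
    (G.deleteEdges Erm).Reachable a b :=
  ⟨p.transfer _ fun e he => by
    rw [SimpleGraph.edgeSet_deleteEdges]
    exact ⟨p.edges_subset_edgeSet he, h e he⟩⟩

lemma reachable_delete_of_not_mem_support' {G : SimpleGraph W} {a b c : W} (p : G.Walk a b)
    (hc : c ∉ p.support) {Erm : Set (Sym2 W)} (hE : ∀ e ∈ Erm, c ∈ e) :
    (G.deleteEdges Erm).Reachable a b :=
  reachable_delete_of_avoid' p fun e he hmem =>
    (not_mem_edge_of_not_mem_support' p hc he) (hE e hmem)

/-- Invariant: every connected component has an even number of edges (vertex-based form). -/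
def JInv (G : SimpleGraph W) : Prop :=
  ∀ v, Even {e ∈ G.edgeSet | ∀ x ∈ e, G.Reachable x v}.ncard

lemma JInv_delete [Fintype W] {G : SimpleGraph W} {r c a b : W}
    (hJ : JInv G) (hrc : G.Reachable r c) (hca : G.Adj c a) (hcb : G.Adj c b) (hab : a ≠ b)
    (hS2 : ∀ x, (∃ y, (G.deleteEdges {s(c,a), s(c,b)}).Adj x y) → G.Reachable r x →
      (G.deleteEdges {s(c,a), s(c,b)}).Reachable r x) :
    JInv (G.deleteEdges {s(c,a), s(c,b)}) := by
  classical
  set Erm : Set (Sym2 W) := {s(c,a), s(c,b)} with hErm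
  set G' := G.deleteEdges Erm with hG'
  have hle : G' ≤ G := SimpleGraph.deleteEdges_le Erm
  intro v
  by_cases hvr : G.Reachable v r
  · by_cases hvr' : G'.Reachable r v
    · -- the component of `v` loses exactly the two removed edges
      have hset : {e ∈ G'.edgeSet | ∀ x ∈ e, G'.Reachable x v}
          = {e ∈ G.edgeSet | ∀ x ∈ e, G.Reachable x v} \ Erm := by
        ext e
        simp only [Set.mem_setOf_eq, Set.mem_diff, hG', SimpleGraph.edgeSet_deleteEdges,
          Set.mem_diff]
        constructor
        · rintro ⟨⟨heG, heE⟩, hreach⟩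
          exact ⟨⟨heG, fun x hx => ((hreach x hx).mono hle)⟩, heE⟩
        · rintro ⟨⟨heG, hreach⟩, heE⟩
          refine ⟨⟨heG, heE⟩, fun x hx => ?_⟩
          have he' : e ∈ G'.edgeSet := by
            rw [hG', SimpleGraph.edgeSet_deleteEdges]; exact ⟨heG, heE⟩
          obtain ⟨y, hy, -⟩ := edge_endpoint' he' hx
          have hrx : G.Reachable r x := ((hreach x hx).trans hvr).symm
          exact (hS2 x ⟨y, hy⟩ hrx).symm.trans hvr'
      rw [hset]
      have hsub : Erm ⊆ {e ∈ G.edgeSet | ∀ x ∈ e, G.Reachable x v} := by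
        intro e he
        have hcv : G.Reachable c v := hrc.symm.trans hvr.symm
        simp only [hErm, Set.mem_insert_iff, Set.mem_singleton_iff] at he
        rcases he with rfl | rfl
        · refine ⟨(SimpleGraph.mem_edgeSet _).mpr hca, fun x hx => ?_⟩
          rcases Sym2.mem_iff.mp hx with rfl | rfl
          · exact hcv
          · exact hca.symm.reachable.trans hcv
        · refine ⟨(SimpleGraph.mem_edgeSet _).mpr hcb, fun x hx => ?_⟩
          rcases Sym2.mem_iff.mp hx with rfl | rfl
          · exact hcv
          · exact hcb.symm.reachable.trans hcv
      have hnepair : s(c,a) ≠ s(c,b) := fun h => hab (Sym2.congr_right.mp h)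
      have h2 : Erm.ncard = 2 := Set.ncard_pair hnepair
      have hfin : {e ∈ G.edgeSet | ∀ x ∈ e, G.Reachable x v}.Finite := Set.toFinite _
      rw [Set.ncard_diff hsub (Set.toFinite _), h2]
      have hge : 2 ≤ {e ∈ G.edgeSet | ∀ x ∈ e, G.Reachable x v}.ncard := by
        rw [← h2]; exact Set.ncard_le_ncard hsub hfin
      rw [Nat.even_sub hge]
      simp [hJ v]
    · -- `v` got disconnected from everything: no edges left in its component
      have hset : {e ∈ G'.edgeSet | ∀ x ∈ e, G'.Reachable x v} = ∅ := by
        rw [Set.eq_empty_iff_forall_notMem]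
        rintro e ⟨he', hreach⟩
        have hx : e.out.1 ∈ e := Sym2.out_fst_mem e
        obtain ⟨y, hy, -⟩ := edge_endpoint' he' hx
        have hxv : G'.Reachable e.out.1 v := hreach _ hx
        have hrx : G.Reachable r e.out.1 := ((hxv.mono hle).trans hvr).symm
        exact hvr' ((hS2 _ ⟨y, hy⟩ hrx).trans hxv)
      rw [hset]
      simp
  · -- `v`'s component is untouched
    have hset : {e ∈ G'.edgeSet | ∀ x ∈ e, G'.Reachable x v}
        = {e ∈ G.edgeSet | ∀ x ∈ e, G.Reachable x v} := by
      ext e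
      simp only [Set.mem_setOf_eq]
      constructor
      · rintro ⟨he', hreach⟩
        have heG : e ∈ G.edgeSet := by
          rw [hG', SimpleGraph.edgeSet_deleteEdges] at he'; exact he'.1
        exact ⟨heG, fun x hx => (hreach x hx).mono hle⟩
      · rintro ⟨heG, hreach⟩
        have heE : e ∉ Erm := by
          intro hmem
          have hce : c ∈ e := by
            simp only [hErm, Set.mem_insert_iff, Set.mem_singleton_iff] at hmem
            rcases hmem with rfl | rfl
            · exact Sym2.mem_mk_left c a
            · exact Sym2.mem_mk_left c b
          exact hvr ((hreach c hce).symm.trans hrc.symm)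
        refine ⟨by rw [hG', SimpleGraph.edgeSet_deleteEdges]; exact ⟨heG, heE⟩,
          fun x hx => ?_⟩
        obtain ⟨p⟩ := hreach x hx
        have hcp : c ∉ p.support := by
          intro hcs
          have hcvr : G.Reachable c v := ⟨p.dropUntil c hcs⟩
          exact hvr (hcvr.symm.trans hrc.symm)
        refine reachable_delete_of_not_mem_support' p hcp ?_
        intro e' he'
        simp only [hErm, Set.mem_insert_iff, Set.mem_singleton_iff] at he'
        rcases he' with rfl | rfl
        · exact Sym2.mem_mk_left c a
        · exact Sym2.mem_mk_left c b
    rw [hset]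
    exact hJ v

lemma card_delete' [Fintype W] {G : SimpleGraph W} {c a b : W} (hca : G.Adj c a)
    (hcb : G.Adj c b) (hab : a ≠ b) :
    (G.deleteEdges {s(c,a), s(c,b)}).edgeSet.ncard + 2 = G.edgeSet.ncard := by
  rw [SimpleGraph.edgeSet_deleteEdges]
  have hsub : ({s(c,a), s(c,b)} : Set (Sym2 W)) ⊆ G.edgeSet := by
    intro e he
    simp only [Set.mem_insert_iff, Set.mem_singleton_iff] at he
    rcases he with rfl | rfl
    · exact (SimpleGraph.mem_edgeSet _).mpr hca
    · exact (SimpleGraph.mem_edgeSet _).mpr hcb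
  have hnepair : s(c,a) ≠ s(c,b) := fun h => hab (Sym2.congr_right.mp h)
  have h2 : ({s(c,a), s(c,b)} : Set (Sym2 W)).ncard = 2 := Set.ncard_pair hnepair
  have hge : 2 ≤ G.edgeSet.ncard := by
    rw [← h2]; exact Set.ncard_le_ncard hsub (Set.toFinite _)
  rw [Set.ncard_diff hsub (Set.toFinite _), h2]
  omega

lemma step_lemma' [Fintype W] {G : SimpleGraph W} (hJ : JInv G)
    {e₀ : Sym2 W} (he₀ : e₀ ∈ G.edgeSet) :
    ∃ c a b, G.Adj c a ∧ G.Adj c b ∧ a ≠ b ∧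
      JInv (G.deleteEdges {s(c,a), s(c,b)}) ∧
      (G.deleteEdges {s(c,a), s(c,b)}).edgeSet.ncard + 2 = G.edgeSet.ncard := by
  classical
  set r := e₀.out.1 with hr
  have hxmem : r ∈ e₀ := Sym2.out_fst_mem e₀
  obtain ⟨w₀, hrw₀, -⟩ := edge_endpoint' he₀ hxmem
  set T : Finset W := Finset.univ.filter (fun x => (∃ y, G.Adj x y) ∧ G.Reachable r x) with hT
  have hrT : r ∈ T := by
    simp only [hT, Finset.mem_filter, Finset.mem_univ, true_and]
    exact ⟨⟨w₀, hrw₀⟩, SimpleGraph.Reachable.refl r⟩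
  obtain ⟨v₀, hv₀T, hmax⟩ := T.exists_max_image (G.dist r) ⟨r, hrT⟩
  set d := G.dist r v₀ with hd
  have hmem : ∀ x, (∃ y, G.Adj x y) → G.Reachable r x → G.dist r x ≤ d := by
    intro x h1 h2
    exact hmax x (by simp only [hT, Finset.mem_filter, Finset.mem_univ, true_and]; exact ⟨h1, h2⟩)
  have hv₀ : (∃ y, G.Adj v₀ y) ∧ G.Reachable r v₀ := by
    simpa only [hT, Finset.mem_filter, Finset.mem_univ, true_and] using hv₀T
  have hd1 : 1 ≤ d := by
    have h1 : G.dist r w₀ ≤ d := hmem w₀ ⟨r, hrw₀.symm⟩ hrw₀.reachable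
    have h2 : G.dist r w₀ ≠ 0 := fun h0 =>
      hrw₀.ne ((SimpleGraph.Reachable.dist_eq_zero_iff hrw₀.reachable).mp h0)
    omega
  by_cases hcase : ∃ v x y, G.Reachable r v ∧ G.dist r v = d ∧ G.Adj v x ∧ G.Adj v y ∧ x ≠ y
  · -- Case 1: some farthest support vertex has two distinct neighbours
    obtain ⟨v, x, y, hrv, hdv, hvx, hvy, hxy⟩ := hcase
    refine ⟨v, x, y, hvx, hvy, hxy, ?_, card_delete' hvx hvy hxy⟩
    refine JInv_delete hJ hrv hvx hvy hxy ?_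
    intro z hz hrz
    set Erm : Set (Sym2 W) := {s(v,x), s(v,y)} with hErm
    have hEv : ∀ e ∈ Erm, v ∈ e := by
      intro e he
      simp only [hErm, Set.mem_insert_iff, Set.mem_singleton_iff] at he
      rcases he with rfl | rfl
      · exact Sym2.mem_mk_left v x
      · exact Sym2.mem_mk_left v y
    obtain ⟨y', hy'⟩ := hz
    have hzy' : G.Adj z y' := (SimpleGraph.deleteEdges_le Erm) hy'
    have hzd : G.dist r z ≤ d := hmem z ⟨y', hzy'⟩ hrz
    by_cases hzv : z = v
    · subst hzv
      have hy'E : s(z, y') ∉ Erm := ((SimpleGraph.deleteEdges_adj).mp hy').2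
      have hry' : G.Reachable r y' := hrz.trans hzy'.reachable
      have hy'd : G.dist r y' ≤ d := hmem y' ⟨z, hzy'.symm⟩ hry'
      obtain ⟨p, hp⟩ := hry'.exists_walk_length_eq_dist
      have hvp : z ∉ p.support := by
        intro hvs
        have hsum := dist_decomp_of_mem_support' p hp hvs
        have hnz : G.dist z y' ≠ 0 := fun h0 => hzy'.ne
          ((SimpleGraph.Reachable.dist_eq_zero_iff (⟨p.dropUntil _ hvs⟩ : G.Reachable z y')).mp h0)
        rw [hdv] at hsum
        omega
      exact (reachable_delete_of_not_mem_support' p hvp hEv).trans hy'.symm.reachable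
    · obtain ⟨p, hp⟩ := hrz.exists_walk_length_eq_dist
      have hvp : v ∉ p.support := by
        intro hvs
        have hsum := dist_decomp_of_mem_support' p hp hvs
        have hnz : G.dist v z ≠ 0 := fun h0 => hzv
          (((SimpleGraph.Reachable.dist_eq_zero_iff (⟨p.dropUntil _ hvs⟩ : G.Reachable v z)).mp h0).symm)
        rw [hdv] at hsum
        omega
      exact reachable_delete_of_not_mem_support' p hvp hEv
  · -- Case 2: all farthest support vertices are pendant
    push_neg at hcase
    obtain ⟨⟨u, hv₀u⟩, hrv₀⟩ := hv₀
    have hdv₀ : G.dist r v₀ = d := rfl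
    have huniq : ∀ y, G.Adj v₀ y → y = u := fun y hy => hcase v₀ y u hrv₀ hdv₀ hy hv₀u
    have hru : G.Reachable r u := hrv₀.trans hv₀u.reachable
    have hv₀r : v₀ ≠ r := by
      intro h
      rw [h, SimpleGraph.dist_self] at hdv₀
      omega
    obtain ⟨p₀, hp₀⟩ := hrv₀.exists_walk_length_eq_dist
    have hdu : G.dist r u + 1 = d := by
      obtain ⟨yy, hadj, q, hq⟩ := SimpleGraph.Walk.exists_eq_cons_of_ne hv₀r p₀.reverse
      have hyu : yy = u := huniq yy hadj
      have hus : u ∈ p₀.support := by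
        have h1 : yy ∈ p₀.reverse.support := by
          rw [hq, SimpleGraph.Walk.support_cons]
          exact List.mem_cons_of_mem _ q.start_mem_support
        rw [hyu] at h1
        rwa [SimpleGraph.Walk.support_reverse, List.mem_reverse] at h1
      have hsum := dist_decomp_of_mem_support' p₀ hp₀ hus
      have h1 : G.dist u v₀ ≤ 1 := by
        have := SimpleGraph.dist_le (SimpleGraph.Walk.cons hv₀u.symm SimpleGraph.Walk.nil)
        simpa using this
      have h2 : G.dist u v₀ ≠ 0 := fun h0 =>
        hv₀u.ne' ((SimpleGraph.Reachable.dist_eq_zero_iff hv₀u.symm.reachable).mp h0)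
      rw [hdv₀] at hsum
      omega
    by_cases h2a : ∃ v', G.Adj u v' ∧ v' ≠ v₀ ∧ G.dist r v' = d
    · -- Case 2a: `u` has a second pendant neighbour at maximal distance
      obtain ⟨v', huv', hv'v₀, hdv'⟩ := h2a
      have hadjuv₀ : G.Adj u v₀ := hv₀u.symm
      have hne : v₀ ≠ v' := fun h => hv'v₀ h.symm
      refine ⟨u, v₀, v', hadjuv₀, huv', hne, ?_, card_delete' hadjuv₀ huv' hne⟩
      have hrv' : G.Reachable r v' := hru.trans huv'.reachable
      have huniq' : ∀ y, G.Adj v' y → y = u := fun y hy => hcase v' y u hrv' hdv' hy huv'.symm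
      refine JInv_delete hJ hru hadjuv₀ huv' hne ?_
      intro z hz hrz
      set Erm : Set (Sym2 W) := {s(u,v₀), s(u,v')} with hErm
      obtain ⟨y', hy'⟩ := hz
      have hzy' : G.Adj z y' := (SimpleGraph.deleteEdges_le Erm) hy'
      have hzd : G.dist r z ≤ d := hmem z ⟨y', hzy'⟩ hrz
      have hzv₀ : z ≠ v₀ := by
        rintro rfl
        have hyu : y' = u := huniq y' hzy'
        subst hyu
        have := ((SimpleGraph.deleteEdges_adj).mp hy').2
        exact this (by rw [Sym2.eq_swap]; exact Set.mem_insert _ _)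
      have hzv' : z ≠ v' := by
        rintro rfl
        have hyu : y' = u := huniq' y' hzy'
        subst hyu
        have := ((SimpleGraph.deleteEdges_adj).mp hy').2
        exact this (by rw [Sym2.eq_swap]; exact Set.mem_insert_iff.mpr (Or.inr rfl))
      obtain ⟨p, hp⟩ := hrz.exists_walk_length_eq_dist
      have hv₀p : v₀ ∉ p.support := by
        intro hvs
        have hsum := dist_decomp_of_mem_support' p hp hvs
        have hnz : G.dist v₀ z ≠ 0 := fun h0 => hzv₀
          (((SimpleGraph.Reachable.dist_eq_zero_iff (⟨p.dropUntil _ hvs⟩ : G.Reachable v₀ z)).mp h0).symm)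
        rw [hdv₀] at hsum
        omega
      have hv'p : v' ∉ p.support := by
        intro hvs
        have hsum := dist_decomp_of_mem_support' p hp hvs
        have hnz : G.dist v' z ≠ 0 := fun h0 => hzv'
          (((SimpleGraph.Reachable.dist_eq_zero_iff (⟨p.dropUntil _ hvs⟩ : G.Reachable v' z)).mp h0).symm)
        rw [hdv'] at hsum
        omega
      refine reachable_delete_of_avoid' p ?_
      intro e he hmemE
      simp only [hErm, Set.mem_insert_iff, Set.mem_singleton_iff] at hmemE
      rcases hmemE with rfl | rfl
      · exact not_mem_edge_of_not_mem_support' p hv₀p he (Sym2.mem_mk_right u v₀)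
      · exact not_mem_edge_of_not_mem_support' p hv'p he (Sym2.mem_mk_right u v')
    · -- Case 2b
      push_neg at h2a
      have hx₀ : ∃ x₀, G.Adj u x₀ ∧ x₀ ≠ v₀ := by
        by_contra hno
        push_neg at hno
        have hcomp : ∀ z w' (q : G.Walk z w'), z = u ∨ z = v₀ → w' = u ∨ w' = v₀ := by
          intro z w' q
          induction q with
          | nil => exact id
          | cons h q ih =>
            intro hz
            apply ih
            rcases hz with rfl | rfl
            · right; exact hno _ h
            · left; exact huniq _ h
        have hedge : ∀ e ∈ G.edgeSet, (∀ x ∈ e, x = u ∨ x = v₀) → e = s(u, v₀) := by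
          intro e
          induction e with
          | _ p q =>
            intro he hend
            have hpq : p ≠ q := ((SimpleGraph.mem_edgeSet _).mp he).ne
            rcases hend p (Sym2.mem_mk_left p q) with rfl | rfl <;>
              rcases hend q (Sym2.mem_mk_right p q) with rfl | rfl
            · exact absurd rfl hpq
            · rfl
            · exact Sym2.eq_swap
            · exact absurd rfl hpq
        have hSr : {e ∈ G.edgeSet | ∀ x ∈ e, G.Reachable x r} = {s(u, v₀)} := by
          ext e
          simp only [Set.mem_setOf_eq, Set.mem_singleton_iff]
          constructor
          · rintro ⟨he, hreach⟩
            refine hedge e he ?_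
            intro x hx
            have hxv₀ : G.Reachable v₀ x := hrv₀.symm.trans (hreach x hx).symm
            obtain ⟨q⟩ := hxv₀
            exact hcomp v₀ x q (Or.inr rfl)
          · rintro rfl
            refine ⟨(SimpleGraph.mem_edgeSet _).mpr hv₀u.symm, fun x hx => ?_⟩
            rcases Sym2.mem_iff.mp hx with rfl | rfl
            · exact hru.symm
            · exact hrv₀.symm
        have hodd := hJ r
        rw [hSr] at hodd
        simp [Set.ncard_singleton] at hodd
      obtain ⟨x₀, hux₀, hx₀v₀⟩ := hx₀
      have hadjuv₀ : G.Adj u v₀ := hv₀u.symm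
      have hne : v₀ ≠ x₀ := fun h => hx₀v₀ h.symm
      refine ⟨u, v₀, x₀, hadjuv₀, hux₀, hne, ?_, card_delete' hadjuv₀ hux₀ hne⟩
      refine JInv_delete hJ hru hadjuv₀ hux₀ hne ?_
      intro z hz hrz
      set Erm : Set (Sym2 W) := {s(u,v₀), s(u,x₀)} with hErm
      have hEu : ∀ e ∈ Erm, u ∈ e := by
        intro e he
        simp only [hErm, Set.mem_insert_iff, Set.mem_singleton_iff] at he
        rcases he with rfl | rfl
        · exact Sym2.mem_mk_left u v₀
        · exact Sym2.mem_mk_left u x₀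
      obtain ⟨y', hy'⟩ := hz
      have hzy' : G.Adj z y' := (SimpleGraph.deleteEdges_le Erm) hy'
      have hzd : G.dist r z ≤ d := hmem z ⟨y', hzy'⟩ hrz
      have hzv₀ : z ≠ v₀ := by
        rintro rfl
        have hyu : y' = u := huniq y' hzy'
        subst hyu
        have := ((SimpleGraph.deleteEdges_adj).mp hy').2
        exact this (by rw [Sym2.eq_swap]; exact Set.mem_insert _ _)
      by_cases hzu : z = u
      · subst hzu
        have hy'E : s(z, y') ∉ Erm := ((SimpleGraph.deleteEdges_adj).mp hy').2
        have hy'v₀ : y' ≠ v₀ := by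
          rintro rfl
          exact hy'E (Set.mem_insert _ _)
        have hry' : G.Reachable r y' := hrz.trans hzy'.reachable
        have hy'd : G.dist r y' + 1 ≤ d := by
          have h1 : G.dist r y' ≤ d := hmem y' ⟨z, hzy'.symm⟩ hry'
          have h2 : G.dist r y' ≠ d := h2a y' hzy' hy'v₀
          omega
        obtain ⟨p, hp⟩ := hry'.exists_walk_length_eq_dist
        have hup : z ∉ p.support := by
          intro hus
          have hsum := dist_decomp_of_mem_support' p hp hus
          have hnz : G.dist z y' ≠ 0 := fun h0 => hzy'.ne
            ((SimpleGraph.Reachable.dist_eq_zero_iff (⟨p.dropUntil _ hus⟩ : G.Reachable z y')).mp h0)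
          omega
        exact (reachable_delete_of_not_mem_support' p hup hEu).trans hy'.symm.reachable
      · obtain ⟨p, hp⟩ := hrz.exists_walk_length_eq_dist
        have hup : u ∉ p.support := by
          intro hus
          have hsum := dist_decomp_of_mem_support' p hp hus
          have hnz : G.dist u z ≠ 0 := fun h0 => hzu
            (((SimpleGraph.Reachable.dist_eq_zero_iff (⟨p.dropUntil _ hus⟩ : G.Reachable u z)).mp h0).symm)
          have h1 : G.dist u z = 1 := by omega
          have hadj : G.Adj u z := SimpleGraph.dist_eq_one_iff_adj.mp h1
          have h3 := h2a z hadj hzv₀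
          omega
        exact reachable_delete_of_not_mem_support' p hup hEu

lemma decomp_of_JInv [Fintype W] :
    ∀ n (G : SimpleGraph W), G.edgeSet.ncard ≤ n → JInv G →
      ∃ D, IsStarDecompOn G 2 D := by
  intro n
  induction n with
  | zero =>
    intro G hG hJ
    have hE : G.edgeSet = ∅ := (Set.ncard_eq_zero (Set.toFinite _)).mp (Nat.le_zero.mp hG)
    refine ⟨∅, ⟨⟨fun p hp => absurd hp (Finset.notMem_empty p),
      fun p hp => absurd hp (Finset.notMem_empty p)⟩, fun e he => ?_⟩⟩
    rw [hE] at he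
    exact absurd he (Set.notMem_empty e)
  | succ n ih =>
    intro G hG hJ
    by_cases hE : G.edgeSet = ∅
    · refine ⟨∅, ⟨⟨fun p hp => absurd hp (Finset.notMem_empty p),
        fun p hp => absurd hp (Finset.notMem_empty p)⟩, fun e he => ?_⟩⟩
      rw [hE] at he
      exact absurd he (Set.notMem_empty e)
    · obtain ⟨e₀, he₀⟩ := Set.nonempty_iff_ne_empty.mpr hE
      obtain ⟨c, a, b, hca, hcb, hab, hJ', hcard⟩ := step_lemma' hJ he₀
      set G' := G.deleteEdges {s(c,a), s(c,b)} with hG'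
      obtain ⟨D', ⟨hstar', hdisj'⟩, hcover'⟩ := ih G' (by omega) hJ'
      have hle : G' ≤ G := SimpleGraph.deleteEdges_le _
      have hnewSE : ∀ e, e ∈ starEdges c ({a, b} : Finset W) ↔ e = s(c,a) ∨ e = s(c,b) := by
        intro e
        simp only [starEdges, Finset.mem_image, Finset.mem_insert, Finset.mem_singleton]
        constructor
        · rintro ⟨v, (rfl | rfl), rfl⟩
          · exact Or.inl rfl
          · exact Or.inr rfl
        · rintro (rfl | rfl)
          · exact ⟨a, Or.inl rfl, rfl⟩
          · exact ⟨b, Or.inr rfl, rfl⟩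
      have holdSE : ∀ p ∈ D', ∀ e ∈ starEdges p.1 p.2, e ∈ G'.edgeSet := by
        intro p hp e he
        obtain ⟨v, hv, rfl⟩ := Finset.mem_image.mp he
        exact (SimpleGraph.mem_edgeSet _).mpr ((hstar' p hp).2 v hv)
      have hErmNotIn : ∀ e, (e = s(c,a) ∨ e = s(c,b)) → e ∉ G'.edgeSet := by
        rintro e he
        rw [hG', SimpleGraph.edgeSet_deleteEdges]
        rintro ⟨-, h2⟩
        rcases he with rfl | rfl
        · exact h2 (Set.mem_insert _ _)
        · exact h2 (Set.mem_insert_iff.mpr (Or.inr rfl))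
      refine ⟨insert (c, ({a, b} : Finset W)) D', ⟨⟨?_, ?_⟩, ?_⟩⟩
      · intro p hp
        rcases Finset.mem_insert.mp hp with rfl | hp'
        · refine ⟨Finset.card_pair hab, ?_⟩
          intro v hv
          rcases Finset.mem_insert.mp hv with rfl | hv'
          · exact hca
          · rw [Finset.mem_singleton.mp hv']; exact hcb
        · obtain ⟨h1, h2⟩ := hstar' p hp'
          exact ⟨h1, fun v hv => hle (h2 v hv)⟩
      · intro p hp q hq hpq
        rcases Finset.mem_insert.mp hp with rfl | hp' <;>
          rcases Finset.mem_insert.mp hq with hq0 | hq'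
        · exact absurd hq0.symm hpq
        · rw [Finset.disjoint_left]
          intro e he1 he2
          exact hErmNotIn e ((hnewSE e).mp he1) (holdSE q hq' e he2)
        · rw [Finset.disjoint_right]
          intro e he1 he2
          rw [hq0] at he1
          exact hErmNotIn e ((hnewSE e).mp he1) (holdSE p hp' e he2)
        · exact hdisj' p hp' q hq' hpq
      · intro e he
        by_cases heE : e = s(c,a) ∨ e = s(c,b)
        · exact ⟨(c, ({a, b} : Finset W)), Finset.mem_insert_self _ _, (hnewSE e).mpr heE⟩
        · push_neg at heE
          have he' : e ∈ G'.edgeSet := by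
            rw [hG', SimpleGraph.edgeSet_deleteEdges]
            refine ⟨he, ?_⟩
            simp only [Set.mem_insert_iff, Set.mem_singleton_iff]
            rintro (rfl | rfl)
            · exact heE.1 rfl
            · exact heE.2 rfl
          obtain ⟨p, hp, hpe⟩ := hcover' e he'
          exact ⟨p, Finset.mem_insert_of_mem hp, hpe⟩

lemma evenJ_iff_evenComp [Fintype W] (G : SimpleGraph W) :
    JInv G ↔ ∀ c : G.ConnectedComponent,
      Even {e ∈ G.edgeSet | ∀ x ∈ e, G.connectedComponentMk x = c}.ncard := by
  have hset : ∀ v, {e ∈ G.edgeSet | ∀ x ∈ e, G.connectedComponentMk x = G.connectedComponentMk v}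
      = {e ∈ G.edgeSet | ∀ x ∈ e, G.Reachable x v} := by
    intro v
    ext e
    simp only [Set.mem_setOf_eq, SimpleGraph.ConnectedComponent.eq]
  constructor
  · intro h c
    obtain ⟨v, rfl⟩ := c.exists_rep
    have hq : Quot.mk G.Reachable v = G.connectedComponentMk v := rfl
    rw [hq, hset]
    exact h v
  · intro h v
    rw [← hset]
    exact h (G.connectedComponentMk v)

lemma comp_even_of_decomp [Fintype W] {G : SimpleGraph W} {D : Finset (W × Finset W)}
    (hD : IsStarDecompOn G 2 D) (c : G.ConnectedComponent) :
    Even {e ∈ G.edgeSet | ∀ x ∈ e, G.connectedComponentMk x = c}.ncard := by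
  classical
  obtain ⟨⟨hstar, hdisj⟩, hcover⟩ := hD
  set Dc := D.filter (fun p => G.connectedComponentMk p.1 = c) with hDc
  set Ec := Dc.biUnion (fun p => starEdges p.1 p.2) with hEc
  have hset : {e ∈ G.edgeSet | ∀ x ∈ e, G.connectedComponentMk x = c} = ↑Ec := by
    ext e
    simp only [Set.mem_setOf_eq, hEc, Finset.coe_biUnion, Finset.mem_coe, Finset.mem_biUnion,
      hDc, Finset.mem_filter, Set.mem_iUnion]
    constructor
    · rintro ⟨he, hcomp⟩
      obtain ⟨p, hpD, hpe⟩ := hcover e he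
      obtain ⟨v, hv, hev⟩ := Finset.mem_image.mp hpe
      refine ⟨p, ⟨hpD, ?_⟩, hpe⟩
      exact hcomp p.1 (by rw [← hev]; exact Sym2.mem_mk_left _ _)
    · rintro ⟨p, ⟨hpD, hpc⟩, hpe⟩
      obtain ⟨v, hv, hev⟩ := Finset.mem_image.mp hpe
      have hadj : G.Adj p.1 v := (hstar p hpD).2 v hv
      subst hev
      refine ⟨(SimpleGraph.mem_edgeSet _).mpr hadj, ?_⟩
      intro x hx
      rcases Sym2.mem_iff.mp hx with rfl | rfl
      · exact hpc
      · rw [← hpc]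
        exact SimpleGraph.ConnectedComponent.sound hadj.symm.reachable
  rw [hset, Set.ncard_coe_finset]
  have hcard : Ec.card = ∑ p ∈ Dc, (starEdges p.1 p.2).card := by
    refine Finset.card_biUnion ?_
    intro p hp q hq hpq
    exact hdisj p (Finset.mem_of_mem_filter _ hp) q (Finset.mem_of_mem_filter _ hq) hpq
  have h2 : ∀ p ∈ Dc, (starEdges p.1 p.2).card = 2 := by
    intro p hp
    have hs := hstar p (Finset.mem_of_mem_filter _ hp)
    rw [starEdges, Finset.card_image_of_injective _ (fun v w h => Sym2.congr_right.mp h), hs.1]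
  rw [hcard, Finset.sum_congr rfl h2, Finset.sum_const, smul_eq_mul]
  exact ⟨Dc.card, by ring⟩

lemma decomp2_iff [Fintype W] (G : SimpleGraph W) :
    (∃ D, IsStarDecompOn G 2 D) ↔ ∀ c : G.ConnectedComponent,
      Even {e ∈ G.edgeSet | ∀ x ∈ e, G.connectedComponentMk x = c}.ncard := by
  constructor
  · rintro ⟨D, hD⟩ c
    exact comp_even_of_decomp hD c
  · intro h
    exact decomp_of_JInv _ G le_rfl ((evenJ_iff_evenComp G).mpr h)

lemma decomp_map {W₁ W₂ : Type*} [DecidableEq W₁] [DecidableEq W₂]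
    {G : SimpleGraph W₁} {H : SimpleGraph W₂} (φ : G ≃g H) :
    (∃ D, IsStarDecompOn G 2 D) → ∃ D, IsStarDecompOn H 2 D := by
  rintro ⟨D, ⟨hstar, hdisj⟩, hcover⟩
  have hφinj : Function.Injective φ := φ.toEquiv.injective
  have hSE : ∀ (cc : W₁) (Lf : Finset W₁),
      starEdges (φ cc) (Lf.image φ) = (starEdges cc Lf).image (Sym2.map φ) := by
    intro cc Lf
    simp only [starEdges, Finset.image_image]
    refine Finset.image_congr ?_
    intro v _
    simp [Sym2.map_pair_eq]
  refine ⟨D.image (fun p => (φ p.1, p.2.image φ)), ⟨⟨?_, ?_⟩, ?_⟩⟩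
  · rintro p' hp'
    obtain ⟨p, hpD, rfl⟩ := Finset.mem_image.mp hp'
    refine ⟨by rw [Finset.card_image_of_injective _ hφinj]; exact (hstar p hpD).1, ?_⟩
    intro v hv
    obtain ⟨w, hw, rfl⟩ := Finset.mem_image.mp hv
    exact φ.map_adj_iff.mpr ((hstar p hpD).2 w hw)
  · rintro p' hp' q' hq' hpq'
    obtain ⟨p, hpD, rfl⟩ := Finset.mem_image.mp hp'
    obtain ⟨q, hqD, rfl⟩ := Finset.mem_image.mp hq'
    have hpq : p ≠ q := fun h => hpq' (by rw [h])
    rw [hSE, hSE]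
    exact (Finset.disjoint_image (Sym2.map.injective hφinj)).mpr (hdisj p hpD q hqD hpq)
  · intro e he
    induction e with
    | _ x y =>
      have he' : s(φ.symm x, φ.symm y) ∈ G.edgeSet := by
        rw [SimpleGraph.mem_edgeSet]
        exact φ.symm.map_adj_iff.mpr ((SimpleGraph.mem_edgeSet _).mp he)
      obtain ⟨p, hpD, hpe⟩ := hcover _ he'
      refine ⟨(φ p.1, p.2.image φ), Finset.mem_image_of_mem _ hpD, ?_⟩
      rw [hSE]
      have : Sym2.map φ s(φ.symm x, φ.symm y) = s(x, y) := by
        simp [Sym2.map_pair_eq]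
      rw [← this]
      exact Finset.mem_image_of_mem _ hpe

lemma joinK_zero_adj {V : Type*} (L : SimpleGraph V) (a b : V) :
    (joinK L 0).Adj (Sum.inl a) (Sum.inl b) ↔ L.Adj a b := by
  constructor
  · rintro ⟨-, h⟩
    exact h a b rfl rfl
  · intro h
    refine ⟨fun hh => h.ne (Sum.inl_injective hh), ?_⟩
    intro a' b' ha hb
    injection ha with h1
    injection hb with h2
    subst h1; subst h2
    exact h

/-- `L` is isomorphic to `L ∨ K₀`. -/
def joinKZeroIso {V : Type*} (L : SimpleGraph V) : L ≃g joinK L 0 where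
  toEquiv := (Equiv.sumEmpty V (Fin 0)).symm
  map_rel_iff' := by
    intro a b
    have ha : (Equiv.sumEmpty V (Fin 0)).symm a = Sum.inl a := rfl
    have hb : (Equiv.sumEmpty V (Fin 0)).symm b = Sum.inl b := rfl
    rw [Equiv.coe_fn_mk] <;> try rfl
    exact joinK_zero_adj L a b

lemma joinK_preconnected {V : Type*} (L : SimpleGraph V) {s : ℕ} (hs : 1 ≤ s) :
    (joinK L s).Preconnected := by
  have hadj : ∀ x : V ⊕ Fin s, x ≠ Sum.inr ⟨0, hs⟩ → (joinK L s).Adj x (Sum.inr ⟨0, hs⟩) := by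
    intro x hx
    exact ⟨hx, fun a b _ hb => by simp at hb⟩
  intro x y
  by_cases hx : x = Sum.inr ⟨0, hs⟩ <;> by_cases hy : y = Sum.inr ⟨0, hs⟩
  · rw [hx, hy]
  · rw [hx]
    exact (hadj y hy).reachable.symm
  · rw [hy]
    exact (hadj x hx).reachable
  · exact (hadj x hx).reachable.trans (hadj y hy).reachable.symm

end StarDecompAux

/-- `L ∨ K_s` has a 2-star decomposition iff `s = 0` and each connected
component of `L` has an even number of edges, or `s ≥ 1` and `|E(L ∨ K_s)|` is even. -/
theorem stmt3 {V : Type*} [Fintype V] [DecidableEq V] (L : SimpleGraph V) (s : ℕ) :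
    (∃ D, IsStarDecompOn (joinK L s) 2 D) ↔
      ((s = 0 ∧ ∀ c : L.ConnectedComponent,
          Even {e ∈ L.edgeSet | ∀ v ∈ e, L.connectedComponentMk v = c}.ncard) ∨
       (1 ≤ s ∧ Even (joinK L s).edgeSet.ncard)) := by
  classical
  rcases Nat.eq_zero_or_pos s with rfl | hs
  · -- case `s = 0`
    have hiff : (∃ D, IsStarDecompOn (joinK L 0) 2 D) ↔ ∃ D, IsStarDecompOn L 2 D :=
      ⟨decomp_map (joinKZeroIso L).symm, decomp_map (joinKZeroIso L)⟩
    rw [hiff, decomp2_iff L]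
    constructor
    · intro h
      exact Or.inl ⟨rfl, h⟩
    · rintro (⟨-, h⟩ | ⟨h, -⟩)
      · exact h
      · exact absurd h (by omega)
  · -- case `s ≥ 1`
    rw [decomp2_iff (joinK L s)]
    have hpre := joinK_preconnected L hs
    have hsub : ∀ (c : (joinK L s).ConnectedComponent),
        {e ∈ (joinK L s).edgeSet | ∀ x ∈ e, (joinK L s).connectedComponentMk x = c}
          = (joinK L s).edgeSet := by
      intro c
      obtain ⟨w, rfl⟩ := c.exists_rep
      have hq : Quot.mk (joinK L s).Reachable w = (joinK L s).connectedComponentMk w := rfl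
      rw [hq]
      ext e
      simp only [Set.mem_setOf_eq]
      exact ⟨fun h => h.1,
        fun h => ⟨h, fun x _ => SimpleGraph.ConnectedComponent.sound (hpre x w)⟩⟩
    constructor
    · intro h
      refine Or.inr ⟨hs, ?_⟩
      have h0 := h ((joinK L s).connectedComponentMk (Sum.inr ⟨0, hs⟩))
      rwa [hsub] at h0
    · rintro (⟨h0, -⟩ | ⟨-, h⟩)
      · omega
      · intro c
        rw [hsub]
        exact h
end

section
/- Let k ≥ 2 be an integer and let G be a graph equipped with a k-precentral function γ. There exists a k-star decomposition of G in which exactly γ(x) of the stars are centred at x for each vertex x of G if and only if Δ_T ≥ 0 for every subset T of V(G), where Δ_T = |E_T| − k·Σ_{x∈T} γ(x) and E_T is the set of edges of G incident with at least one vertex of T. -/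
namespace Stmt4Aux
variable {V : Type*} [DecidableEq V]

/-- the other endpoint of `e` besides `x` (junk if `x ∉ e`). -/
def leafOf (e : Sym2 V) (x : V) : V := if h : x ∈ e then Sym2.Mem.other' h else x

lemma leafOf_spec {e : Sym2 V} {x : V} (h : x ∈ e) : s(x, leafOf e x) = e := by
  rw [leafOf, dif_pos h]; exact Sym2.other_spec' h

lemma leafOf_inj {e e' : Sym2 V} {x : V} (h : x ∈ e) (h' : x ∈ e')
    (hne : e ≠ e') : leafOf e x ≠ leafOf e' x := by
  intro hEq
  exact hne (by rw [← leafOf_spec h, ← leafOf_spec h', hEq])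

lemma starEdges_card (c : V) (L : Finset V) : (starEdges c L).card = L.card :=
  Finset.card_image_of_injOn (fun a _ b _ hab => Sym2.congr_right.mp hab)

lemma mem_starEdges {c : V} {L : Finset V} {e : Sym2 V} :
    e ∈ starEdges c L ↔ ∃ v ∈ L, e = s(c, v) := by
  simp [starEdges, eq_comm]

/-- A finset of size `k*m` can be partitioned into `m` blocks of size `k`. -/
lemma exists_partition (k : ℕ) (hk : k ≠ 0) :
    ∀ (m : ℕ) (s : Finset V), s.card = k * m →
    ∃ P : Finset (Finset V), P.card = m ∧ (∀ L ∈ P, L.card = k ∧ L ⊆ s) ∧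
      (∀ L ∈ P, ∀ L' ∈ P, L ≠ L' → Disjoint L L') ∧ (∀ v ∈ s, ∃ L ∈ P, v ∈ L) := by
  intro m
  induction m with
  | zero =>
    intro s hs
    refine ⟨∅, by simp, by simp, by simp, ?_⟩
    rw [Nat.mul_zero, Finset.card_eq_zero] at hs
    simp [hs]
  | succ m ih =>
    intro s hs
    have hks : k ≤ s.card := by rw [hs, Nat.mul_succ]; omega
    obtain ⟨L, hLs, hLcard⟩ := Finset.exists_subset_card_eq hks
    have hrest : (s \ L).card = k * m := by
      rw [Finset.card_sdiff_of_subset hLs, hs, hLcard, Nat.mul_succ]; omega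
    obtain ⟨P', hP'card, hP'mem, hP'disj, hP'cover⟩ := ih (s \ L) hrest
    have hLnot : L ∉ P' := by
      intro hmem
      obtain ⟨v, hv⟩ := Finset.card_pos.mp (by rw [hLcard]; omega : 0 < L.card)
      exact (Finset.mem_sdiff.mp ((hP'mem L hmem).2 hv)).2 hv
    refine ⟨insert L P', by rw [Finset.card_insert_of_notMem hLnot, hP'card], ?_, ?_, ?_⟩
    · intro L' hL'
      rcases Finset.mem_insert.mp hL' with h | h
      · exact ⟨h ▸ hLcard, h ▸ hLs⟩
      · exact ⟨(hP'mem L' h).1, (hP'mem L' h).2.trans (Finset.sdiff_subset)⟩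
    · intro A hA B hB hne
      rcases Finset.mem_insert.mp hA with hA | hA <;> rcases Finset.mem_insert.mp hB with hB | hB
      · exact absurd (hA.trans hB.symm) hne
      · rw [hA]
        exact (Finset.sdiff_disjoint.mono_left (hP'mem B hB).2).symm
      · rw [hB]
        exact Finset.sdiff_disjoint.mono_left (hP'mem A hA).2
      · exact hP'disj A hA B hB hne
    · intro v hv
      by_cases hvL : v ∈ L
      · exact ⟨L, Finset.mem_insert_self _ _, hvL⟩
      · obtain ⟨B, hB, hvB⟩ := hP'cover v (Finset.mem_sdiff.mpr ⟨hv, hvL⟩)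
        exact ⟨B, Finset.mem_insert_of_mem hB, hvB⟩

end Stmt4Aux
namespace Stmt4Aux

lemma starDelta_eq {V : Type*} [Fintype V] [DecidableEq V] (G : SimpleGraph V)
    [Fintype ↥G.edgeSet] (k : ℕ) (γ : V → ℕ) (T : Finset V)
    [DecidablePred (fun e : Sym2 V => ∃ v ∈ T, v ∈ e)] :
    starDelta G k γ T =
      ((G.edgeFinset.filter (fun e => ∃ v ∈ T, v ∈ e)).card : ℤ) - k * ∑ x ∈ T, γ x := by
  have hset : {e ∈ G.edgeSet | ∃ v ∈ T, v ∈ e} =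
      ↑(G.edgeFinset.filter (fun e => ∃ v ∈ T, v ∈ e)) := by
    ext e
    simp [SimpleGraph.mem_edgeFinset]
  rw [starDelta, hset, Set.ncard_coe_finset]

end Stmt4Aux
namespace Stmt4Aux

lemma forward_dir {V : Type*} [Fintype V] [DecidableEq V] (k : ℕ)
    (G : SimpleGraph V) (γ : V → ℕ)
    (D : Finset (V × Finset V)) (hD : IsStarDecompOn G k D)
    (hcount : ∀ x : V, (D.filter (fun p => p.1 = x)).card = γ x)
    (T : Finset V) : 0 ≤ starDelta G k γ T := by
  classical
  haveI : Fintype ↥G.edgeSet := (G.edgeSet.toFinite).fintype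
  obtain ⟨⟨hstar, hdisj⟩, -⟩ := hD
  rw [starDelta_eq G k γ T]
  set ET := G.edgeFinset.filter (fun e => ∃ v ∈ T, v ∈ e) with hET
  set DT := D.filter (fun p => p.1 ∈ T) with hDT
  have hsub : DT.biUnion (fun p => starEdges p.1 p.2) ⊆ ET := by
    intro e he
    obtain ⟨p, hp, hep⟩ := Finset.mem_biUnion.mp he
    obtain ⟨hpD, hpT⟩ := Finset.mem_filter.mp hp
    obtain ⟨v, hv, rfl⟩ := mem_starEdges.mp hep
    refine Finset.mem_filter.mpr ⟨?_, p.1, hpT, ?_⟩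
    · rw [SimpleGraph.mem_edgeFinset, SimpleGraph.mem_edgeSet]
      exact (hstar p hpD).2 v hv
    · simp
  have hcard : (DT.biUnion (fun p => starEdges p.1 p.2)).card = k * DT.card := by
    rw [Finset.card_biUnion (fun p hp q hq hne =>
      hdisj p (Finset.filter_subset _ _ hp) q (Finset.filter_subset _ _ hq) hne)]
    rw [Finset.sum_congr rfl (fun p hp => by
      rw [starEdges_card, (hstar p (Finset.filter_subset _ _ hp)).1])]
    rw [Finset.sum_const, smul_eq_mul, mul_comm]
  have hDTcard : DT.card = ∑ x ∈ T, γ x := by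
    rw [Finset.card_eq_sum_card_fiberwise
      (fun p hp => (Finset.mem_filter.mp hp).2 : ∀ p ∈ DT, p.1 ∈ T)]
    refine Finset.sum_congr rfl (fun x hx => ?_)
    rw [← hcount x, hDT, Finset.filter_filter]
    refine congrArg Finset.card (Finset.ext fun p => ?_)
    simp only [Finset.mem_filter]
    constructor
    · rintro ⟨h1, -, h3⟩; exact ⟨h1, h3⟩
    · rintro ⟨h1, h3⟩; exact ⟨h1, h3 ▸ hx, h3⟩
  have hle : k * ∑ x ∈ T, γ x ≤ ET.card := by
    calc k * ∑ x ∈ T, γ x = (DT.biUnion (fun p => starEdges p.1 p.2)).card := by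
          rw [hcard, hDTcard]
      _ ≤ ET.card := Finset.card_le_card hsub
  have h2 : ((k * ∑ x ∈ T, γ x : ℕ) : ℤ) ≤ (ET.card : ℤ) := Int.ofNat_le.mpr hle
  push_cast at h2 ⊢
  linarith
end Stmt4Aux
namespace Stmt4Aux

lemma reverse_dir {V : Type*} [Fintype V] [DecidableEq V] (k : ℕ) (hk : 2 ≤ k)
    (G : SimpleGraph V) (γ : V → ℕ)
    (hγ : k * ∑ x, γ x = G.edgeSet.ncard)
    (hΔ : ∀ T : Finset V, 0 ≤ starDelta G k γ T) :
    ∃ D : Finset (V × Finset V), IsStarDecompOn G k D ∧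
      ∀ x : V, (D.filter (fun p => p.1 = x)).card = γ x := by
  classical
  haveI : Fintype ↥G.edgeSet := (G.edgeSet.toFinite).fintype
  have hE : k * ∑ x, γ x = G.edgeFinset.card := by
    rw [hγ, ← SimpleGraph.coe_edgeFinset, Set.ncard_coe_finset]
  -- restate Δ condition in Finset terms
  have hdelta : ∀ T : Finset V,
      k * ∑ x ∈ T, γ x ≤ (G.edgeFinset.filter (fun e => ∃ v ∈ T, v ∈ e)).card := by
    intro T
    have := hΔ T
    rw [starDelta_eq G k γ T] at this
    have h2 : ((k * ∑ x ∈ T, γ x : ℕ) : ℤ) ≤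
        ((G.edgeFinset.filter (fun e => ∃ v ∈ T, v ∈ e)).card : ℤ) := by
      push_cast at this ⊢
      linarith
    exact_mod_cast h2
  -- Hall setup
  set ι := {e : Sym2 V // e ∈ G.edgeFinset} with hι
  set t : ι → Finset (V × ℕ) := fun e =>
    (Finset.univ.filter (· ∈ e.1)).biUnion
      (fun x => ({x} : Finset V) ×ˢ Finset.range (k * γ x)) with ht
  have hmem_t : ∀ (e : ι) (q : V × ℕ), q ∈ t e ↔ q.1 ∈ e.1 ∧ q.2 < k * γ q.1 := by
    intro e q
    simp only [ht, Finset.mem_biUnion, Finset.mem_filter, Finset.mem_univ, true_and,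
      Finset.mem_product, Finset.mem_singleton, Finset.mem_range]
    constructor
    · rintro ⟨x, hx, rfl, hq2⟩; exact ⟨hx, hq2⟩
    · rintro ⟨h1, h2⟩; exact ⟨q.1, h1, rfl, h2⟩
  -- Hall condition
  have hall : ∀ s : Finset ι, s.card ≤ (s.biUnion t).card := by
    intro s
    set Vs := s.biUnion (fun e => Finset.univ.filter (· ∈ e.1)) with hVs
    have hU : s.biUnion t = Vs.biUnion
        (fun x => ({x} : Finset V) ×ˢ Finset.range (k * γ x)) := by
      ext q
      simp only [ht, hVs, Finset.mem_biUnion, Finset.mem_filter, Finset.mem_univ, true_and]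
      tauto
    have hUcard : (s.biUnion t).card = ∑ x ∈ Vs, k * γ x := by
      rw [hU, Finset.card_biUnion]
      · refine Finset.sum_congr rfl (fun x _ => ?_)
        rw [Finset.card_product, Finset.card_singleton, Finset.card_range, one_mul]
      · intro x _ y _ hxy
        simp only [Finset.disjoint_left, Finset.mem_product, Finset.mem_singleton]
        rintro q ⟨rfl, -⟩ ⟨h, -⟩
        exact hxy h
    set T := Finset.univ \ Vs with hT
    set ET := G.edgeFinset.filter (fun e => ∃ v ∈ T, v ∈ e) with hET
    have hsdisj : s.image Subtype.val ⊆ G.edgeFinset \ ET := by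
      intro e he
      obtain ⟨e', he', rfl⟩ := Finset.mem_image.mp he
      refine Finset.mem_sdiff.mpr ⟨e'.2, ?_⟩
      rw [hET, Finset.mem_filter]
      rintro ⟨-, v, hvT, hve⟩
      rw [hT, Finset.mem_sdiff] at hvT
      exact hvT.2 (Finset.mem_biUnion.mpr ⟨e', he',
        Finset.mem_filter.mpr ⟨Finset.mem_univ _, hve⟩⟩)
    have h1 : s.card + ET.card ≤ G.edgeFinset.card := by
      have himg : (s.image Subtype.val).card = s.card :=
        Finset.card_image_of_injective _ Subtype.val_injective
      have hdis : Disjoint (s.image Subtype.val) ET :=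
        Finset.disjoint_left.mpr (fun e he heET =>
          (Finset.mem_sdiff.mp (hsdisj he)).2 heET)
      calc s.card + ET.card = (s.image Subtype.val ∪ ET).card := by
            rw [Finset.card_union_of_disjoint hdis, himg]
        _ ≤ G.edgeFinset.card := Finset.card_le_card
            (Finset.union_subset ((Finset.image_subset_iff.mpr
              (fun e he => e.2)).trans (le_refl _)) (Finset.filter_subset _ _))
    have h2 : k * ∑ x ∈ T, γ x ≤ ET.card := hdelta T
    have h3 : k * ∑ x ∈ T, γ x + k * ∑ x ∈ Vs, γ x = G.edgeFinset.card := by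
      rw [← Nat.mul_add, ← hE]
      congr 1
      rw [hT]
      exact Finset.sum_sdiff (Finset.subset_univ Vs)
    rw [hUcard, ← Finset.mul_sum]
    omega
  obtain ⟨f, hfinj, hft⟩ := (Finset.all_card_le_biUnion_card_iff_exists_injective t).mp hall
  -- fibers
  set fib : V → Finset ι := fun x => Finset.univ.filter (fun e => (f e).1 = x) with hfib
  have hfib_le : ∀ x, (fib x).card ≤ k * γ x := by
    intro x
    have : (fib x).card ≤ (Finset.range (k * γ x)).card := by
      apply Finset.card_le_card_of_injOn (fun e => (f e).2)
      · intro e he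
        have h1 := (hmem_t e (f e)).mp (hft e)
        have h2 : (f e).1 = x := (Finset.mem_filter.mp he).2
        rw [Finset.mem_coe, Finset.mem_range]
        rw [h2] at h1
        exact h1.2
      · intro e he e' he' hee
        have h2 : (f e).1 = x := (Finset.mem_filter.mp (Finset.mem_coe.mp he)).2
        have h2' : (f e').1 = x := (Finset.mem_filter.mp (Finset.mem_coe.mp he')).2
        exact hfinj (Prod.ext (h2.trans h2'.symm) hee)
    rwa [Finset.card_range] at this
  have hfib_sum : ∑ x, (fib x).card = G.edgeFinset.card := by
    have := Finset.card_eq_sum_card_fiberwise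
      (fun (e : ι) (_ : e ∈ (Finset.univ : Finset ι)) => Finset.mem_univ (f e).1)
    rw [← this, Finset.card_univ, Fintype.card_coe]
  have hfib_eq : ∀ x, (fib x).card = k * γ x := by
    have hsum : ∑ x, (fib x).card = ∑ x, k * γ x := by
      rw [hfib_sum, ← hE, Finset.mul_sum]
    intro x
    exact (Finset.sum_eq_sum_iff_of_le (fun x _ => hfib_le x)).mp hsum x (Finset.mem_univ x)
  -- the member x ∈ e for e in fiber of x
  have hxmem : ∀ (x : V) (e : ι), e ∈ fib x → x ∈ e.1 := by
    intro x e he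
    have h1 := (hmem_t e (f e)).mp (hft e)
    have h2 : (f e).1 = x := (Finset.mem_filter.mp he).2
    rw [h2] at h1
    exact h1.1
  -- leaves
  set Lx : V → Finset V := fun x => (fib x).image (fun e => leafOf e.1 x) with hLx
  have hLx_card : ∀ x, (Lx x).card = k * γ x := by
    intro x
    rw [hLx]
    rw [Finset.card_image_of_injOn, hfib_eq]
    intro e he e' he' hleaf
    by_contra hne
    exact leafOf_inj (hxmem x e (Finset.mem_coe.mp he)) (hxmem x e' (Finset.mem_coe.mp he'))
      (fun h => hne (Subtype.ext h)) hleaf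
  have hLx_edge : ∀ x, ∀ v ∈ Lx x, ∃ e : ι, (f e).1 = x ∧ e.1 = s(x, v) := by
    intro x v hv
    obtain ⟨e, he, rfl⟩ := Finset.mem_image.mp hv
    exact ⟨e, (Finset.mem_filter.mp he).2, (leafOf_spec (hxmem x e he)).symm⟩
  have hLx_adj : ∀ x, ∀ v ∈ Lx x, G.Adj x v := by
    intro x v hv
    obtain ⟨e, -, hev⟩ := hLx_edge x v hv
    rw [← SimpleGraph.mem_edgeSet, ← hev]
    exact SimpleGraph.mem_edgeFinset.mp e.2
  have hLx_mem : ∀ (x : V) (e : ι), (f e).1 = x → leafOf e.1 x ∈ Lx x := by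
    intro x e he
    exact Finset.mem_image.mpr ⟨e, Finset.mem_filter.mpr ⟨Finset.mem_univ _, he⟩, rfl⟩
  -- partition leaves into blocks
  have hpart : ∀ x : V, ∃ P : Finset (Finset V), P.card = γ x ∧
      (∀ L ∈ P, L.card = k ∧ L ⊆ Lx x) ∧
      (∀ L ∈ P, ∀ L' ∈ P, L ≠ L' → Disjoint L L') ∧ (∀ v ∈ Lx x, ∃ L ∈ P, v ∈ L) :=
    fun x => exists_partition k (by omega) (γ x) (Lx x) (hLx_card x)
  choose P hPcard hPmem hPdisj hPcover using hpart
  set D : Finset (V × Finset V) :=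
    Finset.univ.biUnion (fun x => (P x).image (fun L => (x, L))) with hD
  have hmemD : ∀ p : V × Finset V, p ∈ D ↔ p.2 ∈ P p.1 := by
    intro p
    simp only [hD, Finset.mem_biUnion, Finset.mem_univ, true_and, Finset.mem_image]
    constructor
    · rintro ⟨x, L, hL, rfl⟩; exact hL
    · intro h; exact ⟨p.1, p.2, h, rfl⟩
  refine ⟨D, ⟨⟨?_, ?_⟩, ?_⟩, ?_⟩
  · -- each member is a k-star
    intro p hp
    have h := (hmemD p).mp hp
    exact ⟨(hPmem p.1 p.2 h).1, fun v hv => hLx_adj p.1 v ((hPmem p.1 p.2 h).2 hv)⟩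
  · -- pairwise disjoint edge sets
    intro p hp q hq hne
    have hpP := (hmemD p).mp hp
    have hqP := (hmemD q).mp hq
    rw [Finset.disjoint_left]
    intro e hep heq
    obtain ⟨v, hv, hev⟩ := mem_starEdges.mp hep
    obtain ⟨w, hw, hew⟩ := mem_starEdges.mp heq
    by_cases hpq : p.1 = q.1
    · have hLne : p.2 ≠ q.2 := fun h => hne (Prod.ext hpq h)
      have hvw : v = w := by
        rw [hev, hpq] at hew
        exact Sym2.congr_right.mp hew
      have hdisj := hPdisj p.1 p.2 hpP q.2 (hpq ▸ hqP) hLne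
      exact Finset.disjoint_left.mp hdisj hv (hvw ▸ hw)
    · obtain ⟨e1, hf1, he1⟩ := hLx_edge p.1 v ((hPmem p.1 p.2 hpP).2 hv)
      obtain ⟨e2, hf2, he2⟩ := hLx_edge q.1 w ((hPmem q.1 q.2 hqP).2 hw)
      have h12 : e1 = e2 := Subtype.ext (by rw [he1, he2, ← hev, ← hew])
      exact hpq (by rw [← hf1, h12, hf2])
  · -- covers all edges
    intro e he
    set eh : ι := ⟨e, SimpleGraph.mem_edgeFinset.mpr he⟩ with heh
    set x := (f eh).1 with hx
    have hfibmem : eh ∈ fib x := Finset.mem_filter.mpr ⟨Finset.mem_univ _, rfl⟩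
    have hxe : x ∈ e := hxmem x eh hfibmem
    have hvLx : leafOf e x ∈ Lx x := hLx_mem x eh rfl
    obtain ⟨L, hL, hvL⟩ := hPcover x (leafOf e x) hvLx
    refine ⟨(x, L), (hmemD (x, L)).mpr hL, ?_⟩
    exact mem_starEdges.mpr ⟨leafOf e x, hvL, (leafOf_spec hxe).symm⟩
  · -- counting
    intro x
    have hfilter : D.filter (fun p => p.1 = x) = (P x).image (fun L => (x, L)) := by
      ext p
      simp only [Finset.mem_filter, Finset.mem_image]
      constructor
      · rintro ⟨hp, rfl⟩
        exact ⟨p.2, (hmemD p).mp hp, rfl⟩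
      · rintro ⟨L, hL, rfl⟩
        exact ⟨(hmemD (x, L)).mpr hL, rfl⟩
    have hinj : Function.Injective (fun L : Finset V => (x, L)) := by
      intro a b h
      exact ((Prod.mk.injEq _ _ _ _).mp h).2
    rw [hfilter, Finset.card_image_of_injective _ hinj, hPcard]

end Stmt4Aux

/-- for a `k`-precentral function `γ` on `G`, a `k`-star decomposition of `G`
with exactly `γ x` stars centred at each vertex `x` exists iff `Δ_T ≥ 0` for every
`T ⊆ V(G)`. -/
theorem stmt4 {V : Type*} [Fintype V] [DecidableEq V] (k : ℕ) (hk : 2 ≤ k)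
    (G : SimpleGraph V) (γ : V → ℕ)
    (hγ : k * ∑ x, γ x = G.edgeSet.ncard) :
    (∃ D : Finset (V × Finset V), IsStarDecompOn G k D ∧
        ∀ x : V, (D.filter (fun p => p.1 = x)).card = γ x) ↔
      ∀ T : Finset V, 0 ≤ starDelta G k γ T := by
  constructor
  · rintro ⟨D, hD, hcount⟩ T
    exact Stmt4Aux.forward_dir k G γ D hD hcount T
  · exact Stmt4Aux.reverse_dir k hk G γ hγ
end

section
/- Let k ≥ 2 be an integer and let G be a graph equipped with a k-precentral function γ. For T ⊆ V(G) set Δ_T = |E_T| − k·Σ_{x∈T} γ(x), where E_T is the set of edges of G incident with at least one vertex of T, and let Δ be the minimum of Δ_T over all subsets T of V(G). If T is a subset of V(G) with Δ_T = Δ which has minimum cardinality among all subsets attaining Δ, then γ(x) ≥ 1 for every x ∈ T. -/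
/-- if `T` attains the minimum value of `Δ` and, subject to this, has minimum
cardinality, then `γ x ≥ 1` for every `x ∈ T`. -/
theorem stmt5 {V : Type*} [Fintype V] (k : ℕ) (hk : 2 ≤ k)
    (G : SimpleGraph V) (γ : V → ℕ)
    (hγ : k * ∑ x, γ x = G.edgeSet.ncard)
    (T : Finset V)
    (hmin : ∀ T' : Finset V, starDelta G k γ T ≤ starDelta G k γ T')
    (hcard : ∀ T' : Finset V, starDelta G k γ T' = starDelta G k γ T → T.card ≤ T'.card) :
    ∀ x ∈ T, 1 ≤ γ x := by
  classical
  intro x hx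
  by_contra h
  have hx0 : γ x = 0 := by omega
  have hsub : {e ∈ G.edgeSet | ∃ v ∈ T.erase x, v ∈ e} ⊆ {e ∈ G.edgeSet | ∃ v ∈ T, v ∈ e} := by
    rintro e ⟨he, v, hv, hve⟩
    exact ⟨he, v, Finset.mem_of_mem_erase hv, hve⟩
  have hfin : {e ∈ G.edgeSet | ∃ v ∈ T, v ∈ e}.Finite := Set.toFinite _
  have hle : starDelta G k γ (T.erase x) ≤ starDelta G k γ T := by
    unfold starDelta
    have h1 := Set.ncard_le_ncard hsub hfin
    have h2 : ∑ y ∈ T.erase x, γ y = ∑ y ∈ T, γ y := Finset.sum_erase T hx0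
    rw [h2]
    exact sub_le_sub_right (by exact_mod_cast h1) _
  have heq : starDelta G k γ (T.erase x) = starDelta G k γ T :=
    le_antisymm hle (hmin _)
  have h3 := hcard _ heq
  have h4 := Finset.card_erase_lt_of_mem hx
  omega
end

section
/- Let k ≥ 2 be an integer, let G be a graph, let U be a pairwise twin subset of V(G), and let γ be a k-precentral function for G. For T ⊆ V(G) set Δ_T = |E_T| − k·Σ_{x∈T} γ(x), where E_T is the set of edges of G incident with at least one vertex of T, and let Δ be the minimum of Δ_T over all subsets T of V(G). Let T be a subset of V(G) with Δ_T = Δ having minimum cardinality among all subsets attaining Δ. Then for any x₁ ∈ U \ T and x₂ ∈ T ∩ U we have γ(x₁) < γ(x₂); in particular, if γ(x) = γ(x′) for all x, x′ ∈ U, then either U ⊆ T or T ∩ U = ∅. -/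
open Classical in
lemma starDelta_insert_key {V : Type*} [Fintype V] (G : SimpleGraph V) (x : V)
    (T : Finset V) (hx : x ∉ T) :
    {e ∈ G.edgeSet | ∃ v ∈ insert x T, v ∈ e}.ncard
      = {e ∈ G.edgeSet | ∃ v ∈ T, v ∈ e}.ncard + {w | G.Adj x w ∧ w ∉ T}.ncard := by
  classical
  set A : Set (Sym2 V) := {e ∈ G.edgeSet | ∃ v ∈ T, v ∈ e} with hA
  set S : Set (Sym2 V) := {e ∈ G.edgeSet | x ∈ e ∧ ∀ v ∈ T, v ∉ e} with hS
  have hsplit : {e ∈ G.edgeSet | ∃ v ∈ insert x T, v ∈ e} = A ∪ S := by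
    ext e
    simp only [Set.mem_setOf_eq, Set.mem_union, hA, hS, Finset.mem_insert]
    constructor
    · rintro ⟨he, v, (rfl | hvT), hve⟩
      · by_cases h : ∃ w ∈ T, w ∈ e
        · exact Or.inl ⟨he, h⟩
        · push_neg at h
          exact Or.inr ⟨he, hve, h⟩
      · exact Or.inl ⟨he, v, hvT, hve⟩
    · rintro (⟨he, v, hvT, hve⟩ | ⟨he, hxe, -⟩)
      · exact ⟨he, v, Or.inr hvT, hve⟩
      · exact ⟨he, x, Or.inl rfl, hxe⟩
  have hdisj : Disjoint A S := by
    rw [Set.disjoint_left]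
    rintro e ⟨-, v, hvT, hve⟩ ⟨-, -, h⟩
    exact h v hvT hve
  have hScard : S.ncard = {w | G.Adj x w ∧ w ∉ T}.ncard := by
    have himg : S = (fun w => s(x, w)) '' {w | G.Adj x w ∧ w ∉ T} := by
      ext e
      induction e using Sym2.ind with
      | _ a b =>
        simp only [hS, Set.mem_setOf_eq, Set.mem_image, SimpleGraph.mem_edgeSet,
          Sym2.mem_iff]
        constructor
        · rintro ⟨hab, (rfl | rfl), hT⟩
          · refine ⟨b, ⟨hab, fun hbT => (hT b hbT (Or.inr rfl))⟩, rfl⟩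
          · refine ⟨a, ⟨hab.symm, fun haT => (hT a haT (Or.inl rfl))⟩, Sym2.eq_swap⟩
        · rintro ⟨w, ⟨hw, hwT⟩, he⟩
          rw [Sym2.eq_iff] at he
          rcases he with ⟨rfl, rfl⟩ | ⟨rfl, rfl⟩
          · exact ⟨hw, Or.inl rfl, by rintro v hvT (rfl | rfl) <;> [exact hx hvT; exact hwT hvT]⟩
          · exact ⟨hw.symm, Or.inr rfl, by rintro v hvT (rfl | rfl) <;> [exact hwT hvT; exact hx hvT]⟩
    rw [himg]
    apply Set.ncard_image_of_injOn
    intro w1 hw1 w2 hw2 h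
    rw [Sym2.eq_iff] at h
    rcases h with ⟨-, h⟩ | ⟨h1, h2⟩
    · exact h
    · exact absurd h2.symm (G.ne_of_adj hw1.1)
  rw [hsplit, Set.ncard_union_eq hdisj (Set.toFinite A) (Set.toFinite S), hScard]

/-- for a pairwise twin set `U` and a minimum-`Δ`, minimum-cardinality set `T`:
`γ x₁ < γ x₂` for `x₁ ∈ U \ T`, `x₂ ∈ T ∩ U`; in particular if `γ` is constant on `U` then
`U ⊆ T` or `T ∩ U = ∅`. -/
theorem stmt6 {V : Type*} [Fintype V] (k : ℕ) (hk : 2 ≤ k)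
    (G : SimpleGraph V) (U : Finset V)
    (hU : ∀ x ∈ U, ∀ y ∈ U, G.neighborSet x \ {y} = G.neighborSet y \ {x})
    (γ : V → ℕ) (hγ : k * ∑ x, γ x = G.edgeSet.ncard)
    (T : Finset V)
    (hmin : ∀ T' : Finset V, starDelta G k γ T ≤ starDelta G k γ T')
    (hcard : ∀ T' : Finset V, starDelta G k γ T' = starDelta G k γ T → T.card ≤ T'.card) :
    (∀ x₁ ∈ U, x₁ ∉ T → ∀ x₂ ∈ U, x₂ ∈ T → γ x₁ < γ x₂) ∧
    ((∀ x ∈ U, ∀ y ∈ U, γ x = γ y) → (U ⊆ T ∨ ∀ x ∈ U, x ∉ T)) := by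
  classical
  have main : ∀ x₁ ∈ U, x₁ ∉ T → ∀ x₂ ∈ U, x₂ ∈ T → γ x₁ < γ x₂ := by
    intro x₁ hx₁U hx₁T x₂ hx₂U hx₂T
    set W₁ : Set V := {w | G.Adj x₁ w ∧ w ∉ T} with hW₁
    set W₂ : Set V := {w | G.Adj x₂ w ∧ w ∉ T.erase x₂} with hW₂
    -- Δ(insert x₁ T) = Δ T + |W₁| - k γ x₁
    have h1 : starDelta G k γ (insert x₁ T)
        = starDelta G k γ T + (W₁.ncard : ℤ) - k * γ x₁ := by
      unfold starDelta
      rw [starDelta_insert_key G x₁ T hx₁T, Finset.sum_insert hx₁T]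
      push_cast
      ring
    -- Δ T = Δ (T.erase x₂) + |W₂| - k γ x₂
    have hx₂e : x₂ ∉ T.erase x₂ := Finset.notMem_erase x₂ T
    have h2 : starDelta G k γ T
        = starDelta G k γ (T.erase x₂) + (W₂.ncard : ℤ) - k * γ x₂ := by
      conv_lhs => rw [← Finset.insert_erase hx₂T]
      unfold starDelta
      rw [starDelta_insert_key G x₂ (T.erase x₂) hx₂e, Finset.sum_insert hx₂e]
      push_cast
      ring
    -- k γ x₁ ≤ |W₁|
    have hle1 : (k * γ x₁ : ℤ) ≤ W₁.ncard := by
      have := hmin (insert x₁ T)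
      rw [h1] at this
      linarith
    -- |W₂| ≤ k γ x₂
    have hle2 : (W₂.ncard : ℤ) ≤ k * γ x₂ := by
      have := hmin (T.erase x₂)
      rw [h2] at this
      linarith
    -- strict: |W₂| ≠ k γ x₂
    have hne : (W₂.ncard : ℤ) ≠ k * γ x₂ := by
      intro heq
      have heqd : starDelta G k γ (T.erase x₂) = starDelta G k γ T := by
        rw [h2, heq]; ring
      have := hcard _ heqd
      have hlt : (T.erase x₂).card < T.card := Finset.card_erase_lt_of_mem hx₂T
      omega
    -- W₁ ⊆ W₂
    have hsub : W₁ ⊆ W₂ := by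
      intro w hw
      obtain ⟨hadj, hwT⟩ := hw
      have hwx₂ : w ≠ x₂ := fun h => hwT (h ▸ hx₂T)
      have htwin := hU x₁ hx₁U x₂ hx₂U
      have hwmem : w ∈ G.neighborSet x₁ \ {x₂} := ⟨hadj, hwx₂⟩
      rw [htwin] at hwmem
      exact ⟨hwmem.1, fun h => hwT (Finset.mem_of_mem_erase h)⟩
    have hmono : (W₁.ncard : ℤ) ≤ W₂.ncard := by
      exact_mod_cast Set.ncard_le_ncard hsub (Set.toFinite W₂)
    have : (k : ℤ) * γ x₁ < k * γ x₂ := by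
      rcases lt_or_eq_of_le hle2 with h | h
      · linarith
      · exact absurd h hne
    have hk0 : 0 < k := by omega
    have : k * γ x₁ < k * γ x₂ := by exact_mod_cast this
    exact Nat.lt_of_mul_lt_mul_left this
  refine ⟨main, fun hconst => ?_⟩
  by_cases hUT : U ⊆ T
  · exact Or.inl hUT
  · right
    obtain ⟨x₁, hx₁U, hx₁T⟩ := Finset.not_subset.mp hUT
    intro x hxU hxT
    have := main x₁ hx₁U hx₁T x hxU hxT
    rw [hconst x₁ hx₁U x hxU] at this
    exact lt_irrefl _ this
end

section
/- Let k ≥ 2 and n ≥ 2 be integers such that k is odd and n ≡ 2 (mod 2k), and let L be a graph of order n with exactly one edge. Then there is a partial k-star decomposition of the complete graph K_n whose leave is L. -/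
/-- for odd `k ≥ 2`, `n ≡ 2 (mod 2k)`, `n ≥ 2`, and `L` a graph of order `n`
with exactly one edge, there is a partial `k`-star decomposition of `K_n` with leave `L`. -/
theorem stmt7 {V : Type*} [Fintype V] [DecidableEq V] (k n : ℕ) (hk : 2 ≤ k) (hn : 2 ≤ n)
    (hkodd : Odd k) (hmod : n % (2 * k) = 2)
    (hV : Fintype.card V = n) (L : SimpleGraph V) (hL : L.edgeSet.ncard = 1) :
    ∃ D, IsPartialStarDecompOn (⊤ : SimpleGraph V) k D ∧ leaveOf (⊤ : SimpleGraph V) D = L := by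
  classical
  obtain ⟨e, he⟩ := Set.ncard_eq_one.mp hL
  obtain ⟨a, b, hab, he⟩ : ∃ a b : V, a ≠ b ∧ L.edgeSet = {s(a, b)} := by
    induction e using Sym2.ind with
    | _ a b =>
      refine ⟨a, b, ?_, he⟩
      have : s(a, b) ∈ L.edgeSet := he ▸ rfl
      exact (((SimpleGraph.mem_edgeSet L).mp this)).ne
  set m := n / (2 * k) with hm
  have hn2 : n = 2 * k * m + 2 := by
    have h := Nat.div_add_mod n (2 * k)
    rw [← hm] at h
    omega
  set N := 2 * k * m + 1 with hNdef
  have hN0 : 0 < N := by omega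
  have hNn : N < n := by omega
  obtain ⟨g, hga, hgb⟩ : ∃ g : Fin n ≃ V, g ⟨N, hNn⟩ = a ∧ g ⟨0, by omega⟩ = b := by
    set e0 : Fin n ≃ V := (Fintype.equivFinOfCardEq hV).symm with he0
    set g1 : Fin n ≃ V := e0.trans (Equiv.swap (e0 ⟨N, hNn⟩) a) with hg1
    have h1 : g1 ⟨N, hNn⟩ = a := by
      rw [hg1, Equiv.trans_apply, Equiv.swap_apply_left]
    have h0N : (⟨0, by omega⟩ : Fin n) ≠ ⟨N, hNn⟩ := by
      intro h
      have := congrArg Fin.val h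
      simp only [] at this
      omega
    have hne1 : g1 ⟨0, by omega⟩ ≠ a := by
      rw [← h1]
      exact fun h => h0N (g1.injective h)
    refine ⟨g1.trans (Equiv.swap (g1 ⟨0, by omega⟩) b), ?_, ?_⟩
    · rw [Equiv.trans_apply, h1, Equiv.swap_apply_of_ne_of_ne (Ne.symm hne1) hab]
    · rw [Equiv.trans_apply, Equiv.swap_apply_left]
  set ι : ℕ → V := fun x => g ⟨x % N, lt_trans (Nat.mod_lt x hN0) hNn⟩ with hι
  have hιeq : ∀ x y : ℕ, ι x = ι y ↔ x % N = y % N := by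
    intro x y
    constructor
    · intro h
      have := congrArg Fin.val (g.injective h)
      simpa using this
    · intro h; simp only [hι, h]
  have hιa : ∀ x, ι x ≠ a := by
    intro x h
    have := congrArg Fin.val (g.injective (h.trans hga.symm))
    simp only [hι] at this
    have := Nat.mod_lt x hN0
    omega
  have hιb : ι 0 = b := by
    rw [hι, ← hgb]
    exact congrArg g (Fin.ext (by simp))
  set leaf : ℕ → ℕ → Finset V :=
    fun s c => (Finset.range k).image (fun t => ι (s + (c * k + t + 1))) with hleaf
  set F : (Fin N × Fin m) ⊕ Fin (2 * m) → V × Finset V :=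
    Sum.elim (fun p => (ι p.1.1, leaf p.1.1 p.2.1)) (fun c => (a, leaf 0 c.1)) with hF
  set D : Finset (V × Finset V) := Finset.image F Finset.univ with hD
  have hoffN : ∀ c t : ℕ, c < 2 * m → t < k → 0 < c * k + t + 1 ∧ c * k + t + 1 < N := by
    intro c t hc ht
    have h1 : (c + 1) * k ≤ (2 * m) * k := Nat.mul_le_mul_right k (by omega)
    have h2 : (c + 1) * k = c * k + k := by ring
    have h3 : (2 * m) * k = 2 * k * m := by ring
    exact ⟨by omega, by omega⟩
  have hoffhalf : ∀ c t : ℕ, c < m → t < k → c * k + t + 1 ≤ k * m := by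
    intro c t hc ht
    have h1 : (c + 1) * k ≤ m * k := Nat.mul_le_mul_right k (by omega)
    have h2 : (c + 1) * k = c * k + k := by ring
    have h3 : m * k = k * m := by ring
    omega
  have hNkm : N = k * m + k * m + 1 := by rw [hNdef]; ring
  have hmemleaf : ∀ s c x, x ∈ leaf s c ↔ ∃ t, t < k ∧ ι (s + (c * k + t + 1)) = x := by
    intro s c x
    simp [hleaf, Finset.mem_image]
  have hsame : ∀ s c c' t t', c < 2 * m → c' < 2 * m → t < k → t' < k →
      ι (s + (c * k + t + 1)) = ι (s + (c' * k + t' + 1)) → c = c' ∧ t = t' := by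
    intro s c c' t t' hc hc' ht ht' h
    have h1 := (hιeq _ _).mp h
    have h3 : (c * k + t + 1) % N = (c' * k + t' + 1) % N :=
      Nat.ModEq.add_left_cancel' s h1
    have hb1 := hoffN c t hc ht
    have hb2 := hoffN c' t' hc' ht'
    rw [Nat.mod_eq_of_lt hb1.2, Nat.mod_eq_of_lt hb2.2] at h3
    have e1 : (k * c + t) % k = t % k := Nat.mul_add_mod k c t
    have e2 : (k * c' + t') % k = t' % k := Nat.mul_add_mod k c' t'
    have e3 : k * c = c * k := by ring
    have e4 : k * c' = c' * k := by ring
    rw [Nat.mod_eq_of_lt ht] at e1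
    rw [Nat.mod_eq_of_lt ht'] at e2
    have e5 : (k * c + t) % k = (k * c' + t') % k := by
      rw [show k * c + t = k * c' + t' from by omega]
    have htt : t = t' := by omega
    have : k * c = k * c' := by omega
    exact ⟨Nat.eq_of_mul_eq_mul_left (by omega) this, htt⟩
  have hcl : ∀ s c t : ℕ, c < 2 * m → t < k → ι s ≠ ι (s + (c * k + t + 1)) := by
    intro s c t hc ht h
    have h1 := (hιeq _ _).mp h
    have h2 := (Nat.modEq_iff_dvd' (Nat.le_add_right s _)).mp h1
    rw [Nat.add_sub_cancel_left] at h2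
    have hb := hoffN c t hc ht
    have := Nat.eq_zero_of_dvd_of_lt h2 hb.2
    omega
  have hcross : ∀ i j o o' : ℕ, 0 < o → 0 < o' → o + o' < N →
      ι i = ι (j + o') → ι j = ι (i + o) → False := by
    intro i j o o' ho ho' hsum h1 h2
    have m1 : Nat.ModEq N i (j + o') := (hιeq _ _).mp h1
    have m2 : Nat.ModEq N j (i + o) := (hιeq _ _).mp h2
    have m3 : Nat.ModEq N i (i + o + o') := m1.trans (m2.add_right o')
    have h4 := (Nat.modEq_iff_dvd' (by omega)).mp m3
    rw [show i + o + o' - i = o + o' by omega] at h4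
    have := Nat.eq_zero_of_dvd_of_lt h4 hsum
    omega
  have hrep : ∀ x : V, x = a ∨ ∃ i, i < N ∧ x = ι i := by
    intro x
    rcases Nat.lt_or_ge (g.symm x).1 N with h | h
    · right
      refine ⟨(g.symm x).1, h, ?_⟩
      conv_lhs => rw [← g.apply_symm_apply x]
      rw [hι]
      exact congrArg g (Fin.ext (by simp [Nat.mod_eq_of_lt h]))
    · left
      have h2 : g.symm x = ⟨N, hNn⟩ := Fin.ext (by have := (g.symm x).2; simp; omega)
      rw [← hga, ← h2, g.apply_symm_apply]
  have hmemSE : ∀ (c : V) (Lf : Finset V) (el : Sym2 V),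
      el ∈ starEdges c Lf ↔ ∃ x ∈ Lf, s(c, x) = el := by
    intro c Lf el; simp [starEdges]
  -- the stars are k-stars
  have hstar : ∀ u, IsStarIn (⊤ : SimpleGraph V) k (F u).1 (F u).2 := by
    rintro (⟨i, c⟩ | c)
    · constructor
      · show (leaf i.1 c.1).card = k
        rw [hleaf, Finset.card_image_of_injOn, Finset.card_range]
        intro t ht t' ht' h
        simp only [Finset.coe_range, Set.mem_Iio] at ht ht'
        exact (hsame i.1 c.1 c.1 t t' (by have := c.2; omega) (by have := c.2; omega) ht ht' h).2
      · intro v hv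
        obtain ⟨t, ht, rfl⟩ := (hmemleaf _ _ _).mp hv
        exact (SimpleGraph.top_adj _ _).mpr (hcl i.1 c.1 t (by have := c.2; omega) ht)
    · constructor
      · show (leaf 0 c.1).card = k
        rw [hleaf, Finset.card_image_of_injOn, Finset.card_range]
        intro t ht t' ht' h
        simp only [Finset.coe_range, Set.mem_Iio] at ht ht'
        exact (hsame 0 c.1 c.1 t t' c.2 c.2 ht ht' h).2
      · intro v hv
        obtain ⟨t, ht, rfl⟩ := (hmemleaf _ _ _).mp hv
        exact (SimpleGraph.top_adj _ _).mpr (Ne.symm (hιa _))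
  -- pairwise disjointness
  have hdisj : ∀ u w, F u ≠ F w →
      Disjoint (starEdges (F u).1 (F u).2) (starEdges (F w).1 (F w).2) := by
    intro u w hne
    rw [Finset.disjoint_left]
    intro el h1 h2
    obtain ⟨x, hx, hex⟩ := (hmemSE _ _ _).mp h1
    obtain ⟨y, hy, hey⟩ := (hmemSE _ _ _).mp h2
    have hxy := hex.trans hey.symm
    rw [Sym2.eq_iff] at hxy
    rcases u with ⟨i, c⟩ | c <;> rcases w with ⟨i', c'⟩ | c'
    ·
      obtain ⟨t, ht, rfl⟩ := (hmemleaf _ _ _).mp hx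
      obtain ⟨t', ht', rfl⟩ := (hmemleaf _ _ _).mp hy
      rcases hxy with ⟨hc, hl⟩ | ⟨hc, hl⟩
      · -- same centre
        have hii : i = i' := by
          have := (hιeq _ _).mp hc
          rw [Nat.mod_eq_of_lt i.2, Nat.mod_eq_of_lt i'.2] at this
          exact Fin.ext this
        subst hii
        obtain ⟨hcc, htt⟩ := hsame i.1 c.1 c'.1 t t'
          (by have := c.2; omega) (by have := c'.2; omega) ht ht' hl
        have hcc' : c = c' := Fin.ext hcc
        exact hne (by rw [hcc'])
      · -- crossing
        have hb1 := hoffN c.1 t (by have := c.2; omega) ht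
        have hb2 := hoffN c'.1 t' (by have := c'.2; omega) ht'
        have hs1 := hoffhalf c.1 t c.2 ht
        have hs2 := hoffhalf c'.1 t' c'.2 ht'
        exact hcross i.1 i'.1 (c.1 * k + t + 1) (c'.1 * k + t' + 1)
          (by omega) (by omega) (by omega) hc hl.symm
    ·
      obtain ⟨t, ht, rfl⟩ := (hmemleaf _ _ _).mp hx
      rcases hxy with ⟨hc, hl⟩ | ⟨hc, hl⟩
      · exact hιa _ hc
      · exact hιa _ hl
    ·
      obtain ⟨t', ht', rfl⟩ := (hmemleaf _ _ _).mp hy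
      rcases hxy with ⟨hc, hl⟩ | ⟨hc, hl⟩
      · exact hιa _ hc.symm
      · exact hιa _ hc.symm
    ·
      obtain ⟨t, ht, rfl⟩ := (hmemleaf _ _ _).mp hx
      obtain ⟨t', ht', rfl⟩ := (hmemleaf _ _ _).mp hy
      rcases hxy with ⟨hc, hl⟩ | ⟨hc, hl⟩
      · obtain ⟨hcc, htt⟩ := hsame 0 c.1 c'.1 t t' c.2 c'.2 ht ht' hl
        have hcc' : c = c' := Fin.ext hcc
        exact hne (by rw [hcc'])
      · exact hιa _ hc.symm
  -- the excluded edge is covered by no star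
  have hnotcov : ∀ u, s(a, b) ∉ starEdges (F u).1 (F u).2 := by
    intro u h
    obtain ⟨x, hx, hex⟩ := (hmemSE _ _ _).mp h
    rw [Sym2.eq_iff] at hex
    rcases u with ⟨i, c⟩ | c
    ·
      obtain ⟨t, ht, rfl⟩ := (hmemleaf _ _ _).mp hx
      rcases hex with ⟨h1, h2⟩ | ⟨h1, h2⟩
      · exact hιa _ h1
      · exact hιa _ h2
    ·
      obtain ⟨t, ht, rfl⟩ := (hmemleaf _ _ _).mp hx
      rcases hex with ⟨h1, h2⟩ | ⟨h1, h2⟩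
      · exact hcl 0 c.1 t c.2 ht (hιb.trans h2.symm)
      · exact hab h1
  -- coverage helpers
  have hstep : ∀ i d : ℕ, i < N → 1 ≤ d → d ≤ k * m →
      ∃ u, s(ι i, ι (i + d)) ∈ starEdges (F u).1 (F u).2 := by
    intro i d hiN h1 h2
    have hk0 : 0 < k := by omega
    have hcm : (d - 1) / k < m := by
      rw [Nat.div_lt_iff_lt_mul hk0]
      have : m * k = k * m := by ring
      omega
    refine ⟨.inl (⟨i, hiN⟩, ⟨(d - 1) / k, hcm⟩), ?_⟩
    rw [hmemSE]
    refine ⟨ι (i + d), ?_, rfl⟩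
    rw [show ((F (.inl (⟨i, hiN⟩, ⟨(d-1)/k, hcm⟩))).2 : Finset V) = leaf i ((d-1)/k) from rfl]
    rw [hmemleaf]
    refine ⟨(d - 1) % k, Nat.mod_lt _ hk0, ?_⟩
    have hdm := Nat.div_add_mod (d - 1) k
    have hcm2 : (d - 1) / k * k = k * ((d - 1) / k) := by ring
    refine congrArg ι ?_
    omega
  have hstepinf : ∀ j : ℕ, 1 ≤ j → j ≤ 2 * k * m →
      ∃ u, s(a, ι j) ∈ starEdges (F u).1 (F u).2 := by
    intro j h1 h2
    have hk0 : 0 < k := by omega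
    have hcm : (j - 1) / k < 2 * m := by
      rw [Nat.div_lt_iff_lt_mul hk0]
      have : 2 * m * k = 2 * k * m := by ring
      omega
    refine ⟨.inr ⟨(j - 1) / k, hcm⟩, ?_⟩
    rw [hmemSE]
    refine ⟨ι j, ?_, rfl⟩
    rw [show ((F (.inr ⟨(j-1)/k, hcm⟩)).2 : Finset V) = leaf 0 ((j-1)/k) from rfl]
    rw [hmemleaf]
    refine ⟨(j - 1) % k, Nat.mod_lt _ hk0, ?_⟩
    have hdm := Nat.div_add_mod (j - 1) k
    have hcm2 : (j - 1) / k * k = k * ((j - 1) / k) := by ring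
    refine congrArg ι ?_
    omega
  have hcyc2 : ∀ i j : ℕ, i < N → j < N → i < j →
      ∃ u, s(ι i, ι j) ∈ starEdges (F u).1 (F u).2 := by
    intro i j hi hj hij
    rcases le_or_gt (j - i) (k * m) with h | h
    · obtain ⟨u, hu⟩ := hstep i (j - i) hi (by omega) h
      rw [show i + (j - i) = j by omega] at hu
      exact ⟨u, hu⟩
    · obtain ⟨u, hu⟩ := hstep j (N - (j - i)) hj (by omega) (by omega)
      have hji : ι (j + (N - (j - i))) = ι i := by
        rw [hιeq, show j + (N - (j - i)) = N + i by omega, Nat.add_mod_left]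
      rw [hji] at hu
      exact ⟨u, by rw [Sym2.eq_swap]; exact hu⟩
  have hcov : ∀ x y : V, x ≠ y → s(x, y) ≠ s(a, b) →
      ∃ u, s(x, y) ∈ starEdges (F u).1 (F u).2 := by
    intro x y hxy hne
    rcases hrep x with rfl | ⟨i, hi, rfl⟩
    · rcases hrep y with rfl | ⟨j, hj, rfl⟩
      · exact absurd rfl hxy
      · have hj0 : j ≠ 0 := by
          rintro rfl
          exact hne (by rw [hιb])
        exact hstepinf j (by omega) (by omega)
    · rcases hrep y with rfl | ⟨j, hj, rfl⟩
      · have hi0 : i ≠ 0 := by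
          rintro rfl
          exact hne (by rw [hιb, Sym2.eq_swap])
        obtain ⟨u, hu⟩ := hstepinf i (by omega) (by omega)
        exact ⟨u, by rw [Sym2.eq_swap]; exact hu⟩
      · have hij : i ≠ j := by
          intro h; exact hxy (by rw [h])
        rcases Nat.lt_or_gt_of_ne hij with h | h
        · exact hcyc2 i j hi hj h
        · obtain ⟨u, hu⟩ := hcyc2 j i hj hi h
          exact ⟨u, by rw [Sym2.eq_swap]; exact hu⟩
  -- assemble
  refine ⟨D, ⟨?_, ?_⟩, ?_⟩
  · intro p hp
    obtain ⟨u, -, rfl⟩ := Finset.mem_image.mp hp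
    exact hstar u
  · intro p hp q hq hpq
    obtain ⟨u, -, rfl⟩ := Finset.mem_image.mp hp
    obtain ⟨w, -, rfl⟩ := Finset.mem_image.mp hq
    exact hdisj u w hpq
  · rw [← SimpleGraph.edgeSet_inj, leaveOf, SimpleGraph.edgeSet_deleteEdges, he]
    ext el
    induction el using Sym2.ind with
    | _ x y =>
      simp only [Set.mem_diff, SimpleGraph.mem_edgeSet, SimpleGraph.top_adj,
        Set.mem_singleton_iff, Finset.mem_coe, Finset.mem_biUnion]
      constructor
      · rintro ⟨hxy, hS⟩
        by_contra hne
        obtain ⟨u, hu⟩ := hcov x y hxy hne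
        exact hS ⟨F u, Finset.mem_image_of_mem F (Finset.mem_univ u), hu⟩
      · intro hE
        rw [Sym2.eq_iff] at hE
        rcases hE with ⟨rfl, rfl⟩ | ⟨rfl, rfl⟩
        · refine ⟨hab, ?_⟩
          rintro ⟨p, hp, hel⟩
          obtain ⟨u, -, rfl⟩ := Finset.mem_image.mp hp
          exact hnotcov u hel
        · refine ⟨hab.symm, ?_⟩
          rintro ⟨p, hp, hel⟩
          obtain ⟨u, -, rfl⟩ := Finset.mem_image.mp hp
          rw [Sym2.eq_swap] at hel
          exact hnotcov u hel
end

section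
/- Let k ≥ 2 and n ≥ 2 be integers such that k is odd and n ≡ 2 (mod 2k), and let L be a graph of order n with exactly one edge. Then |E(L ∨ K_{k−1})| ≡ 0 (mod k), yet there is no k-star decomposition of the join L ∨ K_{k−1}. -/
namespace StarAux
open Finset

variable {V : Type*} {L : SimpleGraph V} {s : ℕ}

lemma adj_inl_inl {a b : V} : (joinK L s).Adj (Sum.inl a) (Sum.inl b) ↔ L.Adj a b := by
  constructor
  · rintro ⟨-, h⟩; exact h a b rfl rfl
  · intro h
    refine ⟨by simpa using h.ne, ?_⟩
    intro a' b' h1 h2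
    rw [Sum.inl.injEq] at h1 h2
    subst h1; subst h2; exact h

lemma adj_inl_inr {a : V} {j : Fin s} : (joinK L s).Adj (Sum.inl a) (Sum.inr j) :=
  ⟨by simp, fun a' b' _ h => by simp at h⟩

lemma adj_inr {i : Fin s} {y : V ⊕ Fin s} (h : Sum.inr i ≠ y) : (joinK L s).Adj (Sum.inr i) y :=
  ⟨h, fun a' b' h' => by simp at h'⟩

lemma adj_inr_iff {i : Fin s} {y : V ⊕ Fin s} : (joinK L s).Adj (Sum.inr i) y ↔ Sum.inr i ≠ y :=
  ⟨fun h => h.ne, adj_inr⟩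

variable [Fintype V] [DecidableEq V] [DecidableRel L.Adj] [DecidableRel (joinK L s).Adj]

omit [DecidableRel L.Adj] in
lemma neighborFinset_inr (i : Fin s) :
    (joinK L s).neighborFinset (Sum.inr i) = univ.erase (Sum.inr i) := by
  ext x
  simp [SimpleGraph.mem_neighborFinset, adj_inr_iff, eq_comm, ne_comm]

omit [DecidableRel L.Adj] in
lemma degree_inr (i : Fin s) :
    (joinK L s).degree (Sum.inr i) = Fintype.card V + s - 1 := by
  rw [← SimpleGraph.card_neighborFinset_eq_degree, neighborFinset_inr, card_erase_of_mem
    (mem_univ _), card_univ]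
  simp

lemma neighborFinset_inl (a : V) :
    (joinK L s).neighborFinset (Sum.inl a)
      = (L.neighborFinset a).image Sum.inl ∪ (univ : Finset (Fin s)).image Sum.inr := by
  ext x
  cases x with
  | inl b => simp [SimpleGraph.mem_neighborFinset, adj_inl_inl]
  | inr j => simp [SimpleGraph.mem_neighborFinset, adj_inl_inr]

lemma degree_inl (a : V) : (joinK L s).degree (Sum.inl a) = L.degree a + s := by
  rw [← SimpleGraph.card_neighborFinset_eq_degree, neighborFinset_inl,
    card_union_of_disjoint]
  · rw [card_image_of_injective _ Sum.inl_injective,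
      card_image_of_injective _ Sum.inr_injective]
    simp [SimpleGraph.card_neighborFinset_eq_degree]
  · simp [Finset.disjoint_left]

lemma twice_card_edges :
    2 * (joinK L s).edgeFinset.card
      = 2 * L.edgeFinset.card + Fintype.card V * s + s * (Fintype.card V + s - 1) := by
  rw [← SimpleGraph.sum_degrees_eq_twice_card_edges, Fintype.sum_sum_type]
  simp only [degree_inl, degree_inr]
  rw [Finset.sum_add_distrib, SimpleGraph.sum_degrees_eq_twice_card_edges]
  simp [mul_comm]


end StarAux

private theorem part1aux {V : Type*} [Fintype V] [DecidableEq V] (k n : ℕ) (hk : 2 ≤ k) (hn : 2 ≤ n)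
    (hkodd : Odd k) (hmod : n % (2 * k) = 2)
    (hV : Fintype.card V = n) (L : SimpleGraph V) (hL : L.edgeSet.ncard = 1) :
    k ∣ (joinK L (k - 1)).edgeSet.ncard := by
  classical
  obtain ⟨t, ht⟩ := hkodd
  have ht1 : 1 ≤ t := by omega
  obtain ⟨m, hm⟩ : ∃ m, n = 2 * k * m + 2 :=
    ⟨n / (2 * k), by conv_lhs => rw [← Nat.div_add_mod n (2 * k), hmod]⟩
  have hLcard : L.edgeFinset.card = 1 := by
    rw [← Set.ncard_coe_finset, SimpleGraph.coe_edgeFinset]; exact hL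
  have hE2 := StarAux.twice_card_edges (L := L) (s := k - 1)
  rw [hV, hLcard] at hE2
  have hns : n + (k - 1) - 1 = k * (2 * m + 1) := by
    have h1 : n + k = k * (2 * m + 1) + 2 := by rw [hm]; ring
    generalize k * (2 * m + 1) = c at h1 ⊢
    omega
  rw [hns] at hE2
  -- hE2 : 2 * E = 2 * 1 + n * (k-1) + (k-1) * (k * (2*m+1))
  have key : 2 * (joinK L (k - 1)).edgeFinset.card = 2 * (k * (4 * t * m + t + 1)) := by
    rw [hE2, hm, ht]
    have : 2 * t + 1 - 1 = 2 * t := by omega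
    rw [this]; ring
  have hE : (joinK L (k - 1)).edgeFinset.card = k * (4 * t * m + t + 1) :=
    Nat.eq_of_mul_eq_mul_left (by norm_num) key
  rw [← SimpleGraph.coe_edgeFinset, Set.ncard_coe_finset, hE]
  exact Dvd.intro _ rfl

open Finset in
private theorem part2aux {V : Type*} [Fintype V] [DecidableEq V] (k n : ℕ) (hk : 2 ≤ k) (hn : 2 ≤ n)
    (hkodd : Odd k) (hmod : n % (2 * k) = 2)
    (hV : Fintype.card V = n) (L : SimpleGraph V) (hL : L.edgeSet.ncard = 1) :
    ¬ ∃ D, IsStarDecompOn (joinK L (k - 1)) k D := by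
  classical
  rintro ⟨D, ⟨⟨hstar, hdisj⟩, hcover⟩⟩
  obtain ⟨t, ht⟩ := hkodd
  have ht1 : 1 ≤ t := by omega
  obtain ⟨m, hm⟩ : ∃ m, n = 2 * k * m + 2 :=
    ⟨n / (2 * k), by conv_lhs => rw [← Nat.div_add_mod n (2 * k), hmod]⟩
  set G := joinK L (k - 1) with hG
  obtain ⟨e₀, he₀⟩ := Set.ncard_eq_one.mp hL
  revert he₀
  induction e₀ using Sym2.ind with
  | _ u v =>
  intro he₀
  have hadjuv : L.Adj u v := by
    rw [← SimpleGraph.mem_edgeSet, he₀]; exact Set.mem_singleton _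
  have huv : u ≠ v := hadjuv.ne
  have hadj_iff : ∀ x y : V, L.Adj x y → (x = u ∧ y = v) ∨ (x = v ∧ y = u) := by
    intro x y hxy
    have h : s(x, y) ∈ L.edgeSet := hxy
    rw [he₀, Set.mem_singleton_iff, Sym2.eq_iff] at h
    exact h
  have huniq_u : ∀ b, L.Adj u b → b = v := by
    intro b hb
    rcases hadj_iff u b hb with ⟨-, h⟩ | ⟨h1, h2⟩
    · exact h
    · exact h2.trans h1
  have huniq_v : ∀ b, L.Adj v b → b = u := by
    intro b hb
    rcases hadj_iff v b hb with ⟨h1, h2⟩ | ⟨-, h2⟩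
    · exact h2.trans h1
    · exact h2
  have hks : 2 ≤ k - 1 := by omega
  set i₀ : Fin (k - 1) := ⟨0, by omega⟩ with hi₀
  set s₀ : V ⊕ Fin (k - 1) := Sum.inr i₀ with hs₀
  -- a star centred at `inl x` has the full neighbourhood as leaves
  have hNfull : ∀ x y : V, (∀ b, L.Adj x b → b = y) → L.Adj x y → ∀ p ∈ D, p.1 = Sum.inl x →
      p.2 = insert (Sum.inl y) ((univ : Finset (Fin (k - 1))).image Sum.inr) := by
    intro x y hy hxy p hp hp1
    obtain ⟨hcard, hadj⟩ := hstar p hp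
    have hNcard : (insert (Sum.inl y) ((univ : Finset (Fin (k - 1))).image (Sum.inr : Fin (k - 1) → V ⊕ Fin (k - 1)))).card = k := by
      rw [Finset.card_insert_of_notMem (by simp),
        Finset.card_image_of_injective _ Sum.inr_injective, Finset.card_univ, Fintype.card_fin]
      omega
    apply Finset.eq_of_subset_of_card_le
    · intro z hz
      have haz := hadj z hz
      rw [hp1] at haz
      cases z with
      | inl b =>
        have hb : b = y := hy b (StarAux.adj_inl_inl.mp haz)
        simp [hb]
      | inr j => simp
    · rw [hNcard, hcard]
  -- only u, v can be `inl` centres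
  have hcenter : ∀ p ∈ D, ∀ w : V, p.1 = Sum.inl w → w = u ∨ w = v := by
    intro p hp w hw
    by_contra hcon
    push_neg at hcon
    obtain ⟨hcard, hadj⟩ := hstar p hp
    have hsub : p.2 ⊆ (univ : Finset (Fin (k - 1))).image Sum.inr := by
      intro z hz
      have haz := hadj z hz
      rw [hw] at haz
      cases z with
      | inl b =>
        exfalso
        rcases hadj_iff w b (StarAux.adj_inl_inl.mp haz) with ⟨rfl, -⟩ | ⟨rfl, -⟩
        · exact hcon.1 rfl
        · exact hcon.2 rfl
      | inr j => simp
    have hle := Finset.card_le_card hsub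
    rw [hcard, Finset.card_image_of_injective _ Sum.inr_injective, Finset.card_univ,
      Fintype.card_fin] at hle
    omega
  -- not both u and v are centres
  have hnotboth : ∀ p ∈ D, ∀ q ∈ D, p.1 = Sum.inl u → q.1 = Sum.inl v → False := by
    intro p hp q hq hp1 hq1
    have hpN := hNfull u v huniq_u hadjuv p hp hp1
    have hqN := hNfull v u huniq_v hadjuv.symm q hq hq1
    have hpq : p ≠ q := by
      intro h
      rw [h, hq1] at hp1
      exact huv (Sum.inl_injective hp1).symm
    have h1 : s(Sum.inl u, Sum.inl v) ∈ starEdges p.1 p.2 := by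
      rw [hp1]
      exact Finset.mem_image.mpr ⟨Sum.inl v, by rw [hpN]; simp, rfl⟩
    have h2 : s(Sum.inl u, Sum.inl v) ∈ starEdges q.1 q.2 := by
      rw [hq1]
      exact Finset.mem_image.mpr ⟨Sum.inl u, by rw [hqN]; simp, Sym2.eq_swap⟩
    exact Finset.disjoint_left.mp (hdisj p hp q hq hpq) h1 h2
  -- the edge count at s₀
  set E₀ : Finset (Sym2 (V ⊕ Fin (k - 1))) := G.incidenceFinset s₀ with hE₀
  have hmemE₀ : ∀ e, e ∈ E₀ ↔ e ∈ G.edgeSet ∧ s₀ ∈ e := by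
    intro e
    rw [hE₀, SimpleGraph.mem_incidenceFinset]
    exact Iff.rfl
  have hE₀card : E₀.card = k * (2 * m + 1) := by
    rw [hE₀, SimpleGraph.card_incidenceFinset_eq_degree, hG, StarAux.degree_inr, hV]
    have h1 : n + k = k * (2 * m + 1) + 2 := by rw [hm]; ring
    generalize k * (2 * m + 1) = c at h1 ⊢
    omega
  have hdecomp : E₀ = D.biUnion (fun p => starEdges p.1 p.2 ∩ E₀) := by
    ext e
    simp only [Finset.mem_biUnion, Finset.mem_inter]
    constructor
    · intro he
      obtain ⟨p, hp, hep⟩ := hcover e ((hmemE₀ e).mp he).1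
      exact ⟨p, hp, hep, he⟩
    · rintro ⟨p, hp, -, he⟩
      exact he
  have hcardsum : E₀.card = ∑ p ∈ D, (starEdges p.1 p.2 ∩ E₀).card := by
    conv_lhs => rw [hdecomp]
    exact Finset.card_biUnion fun p hp q hq hne =>
      Finset.disjoint_of_subset_left Finset.inter_subset_left
        (Finset.disjoint_of_subset_right Finset.inter_subset_left (hdisj p hp q hq hne))
  have hcent_card : ∀ p ∈ D, p.1 = s₀ → (starEdges p.1 p.2 ∩ E₀).card = k := by
    intro p hp hp1
    obtain ⟨hcard, hadj⟩ := hstar p hp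
    have hsub : starEdges p.1 p.2 ⊆ E₀ := by
      intro e he
      obtain ⟨w, hw, rfl⟩ := Finset.mem_image.mp he
      exact (hmemE₀ _).mpr ⟨G.mem_edgeSet.mpr (hadj w hw), by rw [hp1]; simp⟩
    rw [Finset.inter_eq_left.mpr hsub, starEdges, Finset.card_image_of_injOn, hcard]
    intro x _ y _ hxy
    exact Sym2.congr_right.mp hxy
  have hother : ∀ p ∈ D, p.1 ≠ s₀ →
      (starEdges p.1 p.2 ∩ E₀) = if s₀ ∈ p.2 then {s(p.1, s₀)} else ∅ := by
    intro p hp hp1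
    obtain ⟨hcard, hadj⟩ := hstar p hp
    split_ifs with h
    · ext e
      simp only [Finset.mem_inter, Finset.mem_singleton]
      constructor
      · rintro ⟨he, he₀'⟩
        obtain ⟨w, hw, rfl⟩ := Finset.mem_image.mp he
        have : s₀ ∈ s(p.1, w) := ((hmemE₀ _).mp he₀').2
        rw [Sym2.mem_iff] at this
        rcases this with h' | h'
        · exact absurd h'.symm hp1
        · rw [h']
      · rintro rfl
        refine ⟨Finset.mem_image.mpr ⟨s₀, h, rfl⟩, (hmemE₀ _).mpr
          ⟨G.mem_edgeSet.mpr (hadj s₀ h), by simp⟩⟩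
    · rw [Finset.eq_empty_iff_forall_notMem]
      intro e he'
      obtain ⟨he, he₀'⟩ := Finset.mem_inter.mp he'
      obtain ⟨w, hw, rfl⟩ := Finset.mem_image.mp he
      have : s₀ ∈ s(p.1, w) := ((hmemE₀ _).mp he₀').2
      rw [Sym2.mem_iff] at this
      rcases this with h' | h'
      · exact hp1 h'.symm
      · rw [← h'] at hw
        exact h hw
  -- assemble the count
  set T : Finset ((V ⊕ Fin (k - 1)) × Finset (V ⊕ Fin (k - 1))) :=
    D.filter (fun p => ¬ p.1 = s₀ ∧ s₀ ∈ p.2) with hT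
  set A : ℕ := (D.filter (fun p => p.1 = s₀)).card with hA
  have hcount : k * (2 * m + 1) = k * A + T.card := by
    rw [← hE₀card, hcardsum,
      ← Finset.sum_filter_add_sum_filter_not D (fun p => p.1 = s₀)]
    congr 1
    · rw [Finset.sum_congr rfl (fun p hp => hcent_card p (Finset.mem_filter.mp hp).1
        (Finset.mem_filter.mp hp).2), Finset.sum_const, hA, smul_eq_mul, mul_comm]
    · have : ∀ p ∈ D.filter (fun p => ¬ p.1 = s₀),
          (starEdges p.1 p.2 ∩ E₀).card = if s₀ ∈ p.2 then 1 else 0 := by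
        intro p hp
        rw [hother p (Finset.mem_filter.mp hp).1 (Finset.mem_filter.mp hp).2]
        split_ifs <;> simp
      rw [Finset.sum_congr rfl this, ← Finset.card_filter, hT, Finset.filter_filter]
  have hdvdT : k ∣ T.card := by
    have hTeq : T.card = k * (2 * m + 1) - k * A := by
      generalize k * (2 * m + 1) = c at hcount ⊢
      generalize k * A = d at hcount ⊢
      omega
    rw [hTeq]
    exact Nat.dvd_sub (Dvd.intro _ rfl) (Dvd.intro _ rfl)
  -- T is nonempty
  have hT1 : 0 < T.card := by
    have he : s(Sum.inl u, Sum.inl v) ∈ G.edgeSet :=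
      G.mem_edgeSet.mpr (StarAux.adj_inl_inl.mpr hadjuv)
    obtain ⟨q, hq, hqe⟩ := hcover _ he
    obtain ⟨w, hw, hwe⟩ := Finset.mem_image.mp hqe
    have hq1 : q.1 = Sum.inl u ∨ q.1 = Sum.inl v := by
      rw [Sym2.eq_iff] at hwe
      tauto
    have hqT : q ∈ T := by
      rw [hT, Finset.mem_filter]
      refine ⟨hq, ?_, ?_⟩
      · rcases hq1 with h | h <;> simp [h, hs₀]
      · rcases hq1 with h | h
        · rw [hNfull u v huniq_u hadjuv q hq h]; simp [hs₀]
        · rw [hNfull v u huniq_v hadjuv.symm q hq h]; simp [hs₀]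
    exact Finset.card_pos.mpr ⟨q, hqT⟩
  -- T has at most k-1 elements
  have hT2 : T.card ≤ k - 1 := by
    have hinj : Set.InjOn (fun p : (V ⊕ Fin (k - 1)) × Finset (V ⊕ Fin (k - 1)) => p.1) ↑T := by
      intro p hp q hq hpq
      by_contra hne
      rw [Finset.mem_coe, hT, Finset.mem_filter] at hp hq
      have h1 : s(p.1, s₀) ∈ starEdges p.1 p.2 := Finset.mem_image.mpr ⟨s₀, hp.2.2, rfl⟩
      have hpq' : p.1 = q.1 := hpq
      have h2 : s(p.1, s₀) ∈ starEdges q.1 q.2 :=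
        Finset.mem_image.mpr ⟨s₀, hq.2.2, by rw [hpq']⟩
      exact Finset.disjoint_left.mp (hdisj p hp.1 q hq.1 hne) h1 h2
    set c₀ : V ⊕ Fin (k - 1) :=
      if ∃ p ∈ T, p.1 = Sum.inl u then Sum.inl u else Sum.inl v with hc₀
    set S : Finset (V ⊕ Fin (k - 1)) :=
      insert c₀ (((univ : Finset (Fin (k - 1))).erase i₀).image Sum.inr) with hS
    have hsubS : T.image (fun p => p.1) ⊆ S := by
      intro c hc
      obtain ⟨p, hpT, rfl⟩ := Finset.mem_image.mp hc
      have hpD : p ∈ D := (Finset.mem_filter.mp hpT).1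
      have hps₀ := (Finset.mem_filter.mp hpT).2
      rcases hp1 : p.1 with w | j
      · have hw := hcenter p hpD w hp1
        have hpc : p.1 = c₀ := by
          rcases hw with rfl | rfl
          · rw [hc₀, if_pos ⟨p, hpT, hp1⟩, hp1]
          · rw [hc₀, if_neg, hp1]
            rintro ⟨q, hqT, hq1⟩
            exact hnotboth q (Finset.mem_filter.mp hqT).1 p hpD hq1 hp1
        rw [← hp1, hpc]
        exact Finset.mem_insert_self _ _
      · have hji : j ≠ i₀ := by
          rintro rfl
          exact hps₀.1 (by rw [hp1, hs₀])
        exact Finset.mem_insert_of_mem (Finset.mem_image.mpr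
          ⟨j, Finset.mem_erase.mpr ⟨hji, Finset.mem_univ _⟩, rfl⟩)
    have hScard : S.card ≤ k - 1 := by
      calc S.card ≤ (((univ : Finset (Fin (k - 1))).erase i₀).image Sum.inr).card + 1 :=
            Finset.card_insert_le _ _
        _ ≤ k - 1 := by
            rw [Finset.card_image_of_injective _ Sum.inr_injective,
              Finset.card_erase_of_mem (Finset.mem_univ _), Finset.card_univ, Fintype.card_fin]
            omega
    calc T.card = (T.image (fun p => p.1)).card := (Finset.card_image_of_injOn hinj).symm
      _ ≤ S.card := Finset.card_le_card hsubS
      _ ≤ k - 1 := hScard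
  have := Nat.le_of_dvd hT1 hdvdT
  omega


/-- for odd `k ≥ 2`, `n ≡ 2 (mod 2k)`, `n ≥ 2`, and `L` of order `n` with
exactly one edge, `k` divides `|E(L ∨ K_{k-1})|` yet `L ∨ K_{k-1}` has no `k`-star
decomposition. -/
theorem stmt8 {V : Type*} [Fintype V] [DecidableEq V] (k n : ℕ) (hk : 2 ≤ k) (hn : 2 ≤ n)
    (hkodd : Odd k) (hmod : n % (2 * k) = 2)
    (hV : Fintype.card V = n) (L : SimpleGraph V) (hL : L.edgeSet.ncard = 1) :
    k ∣ (joinK L (k - 1)).edgeSet.ncard ∧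
    ¬ ∃ D, IsStarDecompOn (joinK L (k - 1)) k D :=
  ⟨part1aux k n hk hn hkodd hmod hV L hL, part2aux k n hk hn hkodd hmod hV L hL⟩
end

section
/- Let k ≥ 2 and n ≥ 2 be integers such that k is a power of an odd prime and n ≡ 2 (mod 2k), and let L be a graph of order n with exactly one edge. Then there is no k-star decomposition of the join L ∨ K_s for any nonnegative integer s < 2k − 2. -/
section Aux

open Finset Sum

attribute [local instance] Classical.propDecidable

variable {V : Type*} [Fintype V] [DecidableEq V] {L : SimpleGraph V} {s : ℕ}

lemma joinK_adj_inl_inl {u v : V} :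
    (joinK L s).Adj (inl u) (inl v) ↔ L.Adj u v := by
  constructor
  · rintro ⟨-, h⟩; exact h u v rfl rfl
  · intro h
    refine ⟨?_, ?_⟩
    · intro he; exact L.loopless.irrefl u (by cases he; exact h)
    · rintro a b ha hb; cases ha; cases hb; exact h

lemma joinK_adj_inl_inr {u : V} {x : Fin s} : (joinK L s).Adj (inl u) (inr x) := by
  refine ⟨by simp, ?_⟩
  rintro a b - hb; cases hb

lemma joinK_adj_inr_inl {u : V} {x : Fin s} : (joinK L s).Adj (inr x) (inl u) :=
  joinK_adj_inl_inr.symm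

lemma joinK_adj_inr_inr {x y : Fin s} :
    (joinK L s).Adj (inr x) (inr y) ↔ x ≠ y := by
  constructor
  · rintro ⟨h, -⟩ he; exact h (by cases he; rfl)
  · intro h
    refine ⟨by simpa using h, ?_⟩
    rintro a b ha -; cases ha

lemma mem_starEdges' {c : V ⊕ Fin s} {Lf : Finset (V ⊕ Fin s)} {e : Sym2 (V ⊕ Fin s)} :
    e ∈ starEdges c Lf ↔ ∃ v ∈ Lf, e = s(c, v) := by
  simp [starEdges, eq_comm]

lemma starEdges_card (c : V ⊕ Fin s) (Lf : Finset (V ⊕ Fin s)) :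
    (starEdges c Lf).card = Lf.card := by
  refine Finset.card_image_of_injective _ ?_
  intro v w h
  rwa [Sym2.congr_right] at h

lemma leaves_subset_nf {G : SimpleGraph (V ⊕ Fin s)} {k : ℕ} {c : V ⊕ Fin s}
    {Lf : Finset (V ⊕ Fin s)} (h : IsStarIn G k c Lf) :
    Lf ⊆ G.neighborFinset c := by
  intro v hv
  rw [SimpleGraph.mem_neighborFinset]
  exact h.2 v hv

lemma degree_ge {G : SimpleGraph (V ⊕ Fin s)} {k : ℕ} {c : V ⊕ Fin s}
    {Lf : Finset (V ⊕ Fin s)} (h : IsStarIn G k c Lf) : k ≤ G.degree c := by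
  rw [← SimpleGraph.card_neighborFinset_eq_degree, ← h.1]
  exact Finset.card_le_card (leaves_subset_nf h)

lemma nf_inl (u : V) :
    (joinK L s).neighborFinset (inl u) =
      (L.neighborFinset u).image inl ∪ (univ : Finset (Fin s)).image inr := by
  ext w
  rcases w with v | y
  · simp [SimpleGraph.mem_neighborFinset, joinK_adj_inl_inl]
  · simp [SimpleGraph.mem_neighborFinset, joinK_adj_inl_inr]

lemma degree_inl (u : V) : (joinK L s).degree (inl u) = L.degree u + s := by
  rw [← SimpleGraph.card_neighborFinset_eq_degree, nf_inl,
    Finset.card_union_of_disjoint, Finset.card_image_of_injective _ Sum.inl_injective,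
    Finset.card_image_of_injective _ Sum.inr_injective,
    SimpleGraph.card_neighborFinset_eq_degree, Finset.card_univ, Fintype.card_fin]
  simp [Finset.disjoint_left]

lemma nf_inr (x : Fin s) :
    (joinK L s).neighborFinset (inr x) =
      (univ : Finset V).image inl ∪ ((univ : Finset (Fin s)).erase x).image inr := by
  ext w
  rcases w with v | y
  · simp [SimpleGraph.mem_neighborFinset, joinK_adj_inr_inl]
  · simp [SimpleGraph.mem_neighborFinset, joinK_adj_inr_inr, eq_comm, Ne]

lemma degree_inr (x : Fin s) :
    (joinK L s).degree (inr x) = Fintype.card V + (s - 1) := by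
  rw [← SimpleGraph.card_neighborFinset_eq_degree, nf_inr,
    Finset.card_union_of_disjoint, Finset.card_image_of_injective _ Sum.inl_injective,
    Finset.card_image_of_injective _ Sum.inr_injective, Finset.card_univ,
    Finset.card_erase_of_mem (Finset.mem_univ x), Finset.card_univ, Fintype.card_fin]
  simp [Finset.disjoint_left]

lemma nf_L_eq {a b : V} (hab : L.Adj a b)
    (huniq : ∀ u v, L.Adj u v → s(u, v) = s(a, b)) :
    L.neighborFinset a = {b} := by
  ext v
  simp only [SimpleGraph.mem_neighborFinset, Finset.mem_singleton]
  constructor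
  · intro h
    have := huniq a v h
    rw [Sym2.eq_iff] at this
    rcases this with ⟨-, h2⟩ | ⟨h1, h2⟩
    · exact h2
    · exact absurd h1 hab.ne
  · rintro rfl; exact hab

lemma degree_L_a {a b : V} (hab : L.Adj a b)
    (huniq : ∀ u v, L.Adj u v → s(u, v) = s(a, b)) : L.degree a = 1 := by
  rw [← SimpleGraph.card_neighborFinset_eq_degree, nf_L_eq hab huniq]
  simp

lemma eq_endpoint {a b v : V} (hab : L.Adj a b)
    (huniq : ∀ u v, L.Adj u v → s(u, v) = s(a, b)) (hv : 1 ≤ L.degree v) :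
    v = a ∨ v = b := by
  rw [← SimpleGraph.card_neighborFinset_eq_degree] at hv
  obtain ⟨z, hz⟩ := Finset.card_pos.mp hv
  rw [SimpleGraph.mem_neighborFinset] at hz
  have := huniq v z hz
  rw [Sym2.eq_iff] at this
  rcases this with ⟨h1, -⟩ | ⟨h1, -⟩
  · exact Or.inl h1
  · exact Or.inr h1

/-- Core of case `s = k - 1`: counting at a vertex of the clique side. -/
lemma case2core {k n t : ℕ} (hk : 2 ≤ k) (hs : s + 1 = k)
    (hV : Fintype.card V = n) (hn : n = 2 * k * t + 2)
    {a b : V} (hab : L.Adj a b)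
    (huniq : ∀ u v, L.Adj u v → s(u, v) = s(a, b))
    {D : Finset ((V ⊕ Fin s) × Finset (V ⊕ Fin s))}
    (hstar : ∀ p ∈ D, IsStarIn (joinK L s) k p.1 p.2)
    (hdisj : ∀ p ∈ D, ∀ q ∈ D, p ≠ q →
      Disjoint (starEdges p.1 p.2) (starEdges q.1 q.2))
    (hcov : ∀ e ∈ (joinK L s).edgeSet, ∃ p ∈ D, e ∈ starEdges p.1 p.2)
    {Lf : Finset (V ⊕ Fin s)} (hPD : ((inl a : V ⊕ Fin s), Lf) ∈ D) : False := by
  have huniqcov : ∀ p ∈ D, ∀ q ∈ D, ∀ e : Sym2 (V ⊕ Fin s),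
      e ∈ starEdges p.1 p.2 → e ∈ starEdges q.1 q.2 → p = q := by
    intro p hp q hq e he1 he2
    by_contra hne
    exact (Finset.disjoint_left.mp (hdisj p hp q hq hne) he1) he2
  -- the star at `inl a` uses all of its neighbourhood
  have hdega : (joinK L s).degree (inl a : V ⊕ Fin s) = k := by
    rw [degree_inl, degree_L_a hab huniq]; omega
  have hLf : Lf = (joinK L s).neighborFinset (inl a) := by
    refine Finset.eq_of_subset_of_card_le (leaves_subset_nf (hstar _ hPD)) ?_
    rw [SimpleGraph.card_neighborFinset_eq_degree, hdega, (hstar _ hPD).1]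
  have hs1 : 1 ≤ s := by omega
  set x : Fin s := ⟨0, hs1⟩ with hxdef
  set w : V ⊕ Fin s := inr x with hwdef
  set Dw : Finset ((V ⊕ Fin s) × Finset (V ⊕ Fin s)) :=
    D.filter (fun p => p.1 = w) with hDwdef
  set Ew : Finset (Sym2 (V ⊕ Fin s)) :=
    ((joinK L s).neighborFinset w).image (fun u => s(w, u)) with hEwdef
  set U : Finset (Sym2 (V ⊕ Fin s)) := Dw.biUnion (fun p => starEdges p.1 p.2) with hUdef
  have hmemEw : ∀ e, e ∈ Ew ↔ ∃ u, (joinK L s).Adj w u ∧ e = s(w, u) := by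
    intro e
    simp [hEwdef, SimpleGraph.mem_neighborFinset, eq_comm, and_comm]
  have hUsub : U ⊆ Ew := by
    intro e he
    rw [Finset.mem_biUnion] at he
    obtain ⟨p, hp, hep⟩ := he
    rw [Finset.mem_filter] at hp
    rw [mem_starEdges'] at hep
    obtain ⟨v, hv, rfl⟩ := hep
    rw [hmemEw]
    exact ⟨v, by rw [← hp.2]; exact (hstar p hp.1).2 v hv, by rw [hp.2]⟩
  have hUcard : U.card = k * Dw.card := by
    rw [hUdef, Finset.card_biUnion]
    · rw [Finset.sum_congr rfl (fun p hp => ?_), Finset.sum_const, smul_eq_mul, mul_comm]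
      rw [starEdges_card, (hstar p (Finset.mem_filter.mp hp).1).1]
    · intro p hp q hq hne
      exact hdisj p (Finset.mem_filter.mp hp).1 q (Finset.mem_filter.mp hq).1 hne
  have hEwcard : Ew.card = k * (2 * t + 1) := by
    rw [hEwdef, Finset.card_image_of_injective _ (fun v u h => by
      rwa [Sym2.congr_right] at h), SimpleGraph.card_neighborFinset_eq_degree,
      degree_inr, hV]
    have hkk : k * (2 * t + 1) = 2 * k * t + k := by ring
    omega
  set F : Finset (Sym2 (V ⊕ Fin s)) := Ew \ U with hFdef
  have hFcard : F.card = Ew.card - U.card := Finset.card_sdiff_of_subset hUsub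
  have hkdvd : k ∣ F.card := by
    rw [hFcard, hEwcard, hUcard]
    exact Nat.dvd_sub ⟨_, rfl⟩ ⟨_, rfl⟩
  have hwLf : w ∈ Lf := by
    rw [hLf, SimpleGraph.mem_neighborFinset]; exact joinK_adj_inl_inr
  have he0P : s(w, (inl a : V ⊕ Fin s)) ∈ starEdges (inl a : V ⊕ Fin s) Lf := by
    rw [mem_starEdges']
    exact ⟨w, hwLf, Sym2.eq_swap⟩
  have hwa : s(w, (inl a : V ⊕ Fin s)) ∈ F := by
    rw [hFdef, Finset.mem_sdiff]
    constructor
    · rw [hmemEw]; exact ⟨inl a, joinK_adj_inr_inl, rfl⟩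
    · intro hU
      rw [Finset.mem_biUnion] at hU
      obtain ⟨q, hq, heq⟩ := hU
      rw [Finset.mem_filter] at hq
      have := huniqcov q hq.1 _ hPD _ heq he0P
      rw [this] at hq
      simp [hwdef] at hq
  have hFpos : 0 < F.card := Finset.card_pos.mpr ⟨_, hwa⟩
  set T : Finset (V ⊕ Fin s) :=
    insert (inl a : V ⊕ Fin s) (((univ : Finset (Fin s)).erase x).image inr) with hTdef
  have hFT : F ⊆ T.image (fun u => s(w, u)) := by
    intro e he
    rw [hFdef, Finset.mem_sdiff] at he
    obtain ⟨heEw, heU⟩ := he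
    rw [hmemEw] at heEw
    obtain ⟨u, hadj, rfl⟩ := heEw
    rw [Finset.mem_image]
    rcases u with v | y
    · -- other endpoint on the `L` side: its covering star is centred there
      obtain ⟨Q, hQD, hQe⟩ := hcov s(w, (inl v : V ⊕ Fin s)) (by rwa [SimpleGraph.mem_edgeSet])
      have hQe' := mem_starEdges'.mp hQe
      obtain ⟨v', hv', hve2⟩ := hQe'
      rw [Sym2.eq_iff] at hve2
      have hQ1 : Q.1 = inl v := by
        rcases hve2 with ⟨h1, -⟩ | ⟨-, h2⟩
        · exfalso
          apply heU
          rw [Finset.mem_biUnion]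
          refine ⟨Q, ?_, hQe⟩
          rw [Finset.mem_filter]; exact ⟨hQD, h1.symm⟩
        · exact h2.symm
      have hdegv : 1 ≤ L.degree v := by
        have := degree_ge (hstar Q hQD)
        rw [hQ1, degree_inl] at this
        omega
      rcases eq_endpoint hab huniq hdegv with rfl | rfl
      · exact ⟨inl v, Finset.mem_insert_self _ _, rfl⟩
      · -- the centre can't be `inl b`: its star would also contain the `L`-edge
        exfalso
        have hdegb : (joinK L s).degree (inl v : V ⊕ Fin s) = k := by
          rw [degree_inl, degree_L_a hab.symm
            (fun u' v' h => (huniq u' v' h).trans Sym2.eq_swap)]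
          omega
        have hQ2 : Q.2 = (joinK L s).neighborFinset (inl v) := by
          refine Finset.eq_of_subset_of_card_le ?_ ?_
          · have := leaves_subset_nf (hstar Q hQD); rwa [hQ1] at this
          · rw [SimpleGraph.card_neighborFinset_eq_degree, hdegb, (hstar Q hQD).1]
        have haQ2 : (inl a : V ⊕ Fin s) ∈ Q.2 := by
          rw [hQ2, SimpleGraph.mem_neighborFinset, joinK_adj_inl_inl]
          exact hab.symm
        have he0Q : s((inl a : V ⊕ Fin s), (inl v : V ⊕ Fin s)) ∈ starEdges Q.1 Q.2 := by
          rw [mem_starEdges']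
          exact ⟨inl a, haQ2, by rw [hQ1, Sym2.eq_swap]⟩
        have he0P' : s((inl a : V ⊕ Fin s), (inl v : V ⊕ Fin s)) ∈
            starEdges (inl a : V ⊕ Fin s) Lf := by
          rw [mem_starEdges']
          refine ⟨inl v, ?_, rfl⟩
          rw [hLf, SimpleGraph.mem_neighborFinset, joinK_adj_inl_inl]
          exact hab
        have := huniqcov Q hQD _ hPD _ he0Q he0P'
        have : Q.1 = inl a := by rw [this]
        rw [hQ1] at this
        exact hab.ne' (by injection this)
    · -- other endpoint on the clique side
      have hyx : y ≠ x := by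
        rw [hwdef, joinK_adj_inr_inr] at hadj
        exact fun h => hadj (by rw [h])
      exact ⟨inr y, Finset.mem_insert_of_mem
        (Finset.mem_image_of_mem _ (Finset.mem_erase.mpr ⟨hyx, Finset.mem_univ y⟩)), rfl⟩
  have hTcard : T.card ≤ k - 1 := by
    calc T.card ≤ (((univ : Finset (Fin s)).erase x).image inr).card + 1 :=
        Finset.card_insert_le _ _
    _ ≤ (s - 1) + 1 := by
        rw [Finset.card_image_of_injective _ Sum.inr_injective,
          Finset.card_erase_of_mem (Finset.mem_univ x), Finset.card_univ, Fintype.card_fin]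
    _ ≤ k - 1 := by omega
  have hFle : F.card ≤ k - 1 := by
    calc F.card ≤ (T.image (fun u => s(w, u))).card := Finset.card_le_card hFT
    _ ≤ T.card := Finset.card_image_le
    _ ≤ k - 1 := hTcard
  have := Nat.le_of_dvd hFpos hkdvd
  omega

end Aux

/-- for `k ≥ 2` a power of an odd prime, `n ≡ 2 (mod 2k)`, `n ≥ 2`, and `L` of
order `n` with exactly one edge, `L ∨ K_s` has no `k`-star decomposition for any
`s < 2k - 2`. -/
theorem stmt9 {V : Type*} [Fintype V] [DecidableEq V] (k n : ℕ) (hk : 2 ≤ k) (hn : 2 ≤ n)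
    (hkpp : ∃ p i : ℕ, p.Prime ∧ Odd p ∧ k = p ^ i)
    (hmod : n % (2 * k) = 2)
    (hV : Fintype.card V = n) (L : SimpleGraph V) (hL : L.edgeSet.ncard = 1) :
    ∀ s : ℕ, s < 2 * k - 2 → ¬ ∃ D, IsStarDecompOn (joinK L s) k D := by
  classical
  intro s hs hex
  obtain ⟨D, ⟨⟨hstar, hdisj⟩, hcov⟩⟩ := hex
  -- the unique edge of `L`
  have h1 : ∃ a b : V, L.Adj a b ∧ ∀ u v, L.Adj u v → s(u, v) = s(a, b) := by
    obtain ⟨e, he⟩ := Set.ncard_eq_one.mp hL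
    induction e using Sym2.ind with
    | _ a b =>
      have hab : L.Adj a b := by
        rw [← SimpleGraph.mem_edgeSet, he]; rfl
      exact ⟨a, b, hab, fun u v h => by
        have : s(u, v) ∈ L.edgeSet := h
        rw [he] at this
        exact this⟩
  obtain ⟨a, b, hab, huniq⟩ := h1
  set t : ℕ := n / (2 * k) with htdef
  have hnt : n = 2 * k * t + 2 := by
    have h := Nat.div_add_mod n (2 * k)
    rw [← htdef, hmod] at h
    omega
  have he0 : s((Sum.inl a : V ⊕ Fin s), (Sum.inl b : V ⊕ Fin s)) ∈ (joinK L s).edgeSet := by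
    rw [SimpleGraph.mem_edgeSet, joinK_adj_inl_inl]; exact hab
  rcases lt_trichotomy (s + 1) k with hcase | hcase | hcase
  · -- Case s + 2 ≤ k : the centre of the star containing the L-edge has degree < k
    obtain ⟨P, hPD, hPe⟩ := hcov _ he0
    rw [mem_starEdges'] at hPe
    obtain ⟨v, hv, hve⟩ := hPe
    have hdegP : k ≤ (joinK L s).degree P.1 := degree_ge (hstar P hPD)
    have hP1 : P.1 = Sum.inl a ∨ P.1 = Sum.inl b := by
      rw [Sym2.eq_iff] at hve
      tauto
    have huniq' : ∀ u v, L.Adj u v → s(u, v) = s(b, a) :=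
      fun u v h => (huniq u v h).trans Sym2.eq_swap
    rcases hP1 with h | h <;> rw [h, degree_inl] at hdegP
    · rw [degree_L_a hab huniq] at hdegP; omega
    · rw [degree_L_a hab.symm huniq'] at hdegP; omega
  · -- Case s = k - 1 : the counting argument at a clique vertex
    obtain ⟨P, hPD, hPe⟩ := hcov _ he0
    rw [mem_starEdges'] at hPe
    obtain ⟨v, hv, hve⟩ := hPe
    have hP1 : P.1 = Sum.inl a ∨ P.1 = Sum.inl b := by
      rw [Sym2.eq_iff] at hve
      tauto
    have huniq' : ∀ u v, L.Adj u v → s(u, v) = s(b, a) :=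
      fun u v h => (huniq u v h).trans Sym2.eq_swap
    obtain ⟨c, Lf⟩ := P
    rcases hP1 with h | h <;> dsimp at h <;> subst h
    · exact case2core hk hcase hV hnt hab huniq hstar hdisj hcov hPD
    · exact case2core hk hcase hV hnt hab.symm huniq' hstar hdisj hcov hPD
  · -- Case k ≤ s : edge-count divisibility fails
    have hedge : (joinK L s).edgeFinset = D.biUnion (fun p => starEdges p.1 p.2) := by
      ext e
      rw [SimpleGraph.mem_edgeFinset, Finset.mem_biUnion]
      constructor
      · intro he; exact hcov e he
      · rintro ⟨p, hp, hep⟩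
        rw [mem_starEdges'] at hep
        obtain ⟨v, hv, rfl⟩ := hep
        rw [SimpleGraph.mem_edgeSet]
        exact (hstar p hp).2 v hv
    have hcard : (joinK L s).edgeFinset.card = k * D.card := by
      rw [hedge, Finset.card_biUnion hdisj]
      rw [Finset.sum_congr rfl (fun p hp => ?_), Finset.sum_const, smul_eq_mul, mul_comm]
      rw [starEdges_card, (hstar p hp).1]
    have hsum : ∑ v : V ⊕ Fin s, (joinK L s).degree v = 2 * (k * D.card) := by
      rw [SimpleGraph.sum_degrees_eq_twice_card_edges, hcard]
    rw [Fintype.sum_sum_type] at hsum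
    have hsumL : ∑ u : V, (joinK L s).degree (Sum.inl u) = 2 + n * s := by
      have : ∀ u : V, (joinK L s).degree (Sum.inl u) = L.degree u + s :=
        fun u => degree_inl u
      rw [Finset.sum_congr rfl (fun u _ => this u), Finset.sum_add_distrib,
        SimpleGraph.sum_degrees_eq_twice_card_edges, Finset.sum_const, smul_eq_mul,
        Finset.card_univ, hV]
      have hL1 : L.edgeFinset.card = 1 := by
        rw [← Set.ncard_coe_finset, SimpleGraph.coe_edgeFinset, hL]
      rw [hL1]
    have hsumR : ∑ x : Fin s, (joinK L s).degree (Sum.inr x) = s * (n + (s - 1)) := by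
      rw [Finset.sum_congr rfl (fun x _ => by rw [degree_inr, hV]), Finset.sum_const,
        smul_eq_mul, Finset.card_univ, Fintype.card_fin]
    rw [hsumL, hsumR] at hsum
    -- now: 2 + n*s + s*(n+s-1) = 2*(k*D.card), derive 2k ∣ (s+1)(s+2)
    have hs1 : 1 ≤ s := by omega
    have hns : n + (s - 1) = 2 * k * t + s + 1 := by omega
    rw [hns, hnt] at hsum
    have key : (s + 1) * (s + 2) + 2 * k * (2 * t * s) = 2 * (k * D.card) := by
      rw [← hsum]; ring
    have hdvd : 2 * k ∣ (s + 1) * (s + 2) := by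
      have h' : (s + 1) * (s + 2) = 2 * (k * D.card) - 2 * k * (2 * t * s) :=
        Nat.eq_sub_of_add_eq key
      rw [h']
      exact Nat.dvd_sub ⟨D.card, by ring⟩ ⟨_, rfl⟩
    obtain ⟨p, i, hp, hpodd, hki⟩ := hkpp
    have hkdvd : k ∣ (s + 1) * (s + 2) := dvd_trans ⟨2, by ring⟩ hdvd
    have hfin : ∀ m : ℕ, k ∣ m → k < m → m < 2 * k → False := by
      intro m hdm h1 h2
      obtain ⟨c, hc⟩ := hdm
      have hc2 : 2 ≤ c := by
        rcases Nat.lt_or_ge c 2 with h | h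
        · interval_cases c <;> omega
        · exact h
      have : k * 2 ≤ k * c := Nat.mul_le_mul_left k hc2
      omega
    by_cases hpd : p ∣ (s + 1)
    · have h2 : ¬ p ∣ (s + 2) := by
        intro h
        have : p ∣ 1 := by
          have := Nat.dvd_sub h hpd
          simpa using this
        exact Nat.Prime.one_lt hp |>.ne' (Nat.le_antisymm (Nat.le_of_dvd one_pos this) hp.one_lt.le ▸ rfl)
      have hcop : Nat.Coprime k (s + 2) := by
        rw [hki]
        exact Nat.Coprime.pow_left i ((Nat.Prime.coprime_iff_not_dvd hp).mpr h2)
      have hk1 : k ∣ (s + 1) := hcop.dvd_of_dvd_mul_right hkdvd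
      exact hfin _ hk1 (by omega) (by omega)
    · have hcop : Nat.Coprime k (s + 1) := by
        rw [hki]
        exact Nat.Coprime.pow_left i ((Nat.Prime.coprime_iff_not_dvd hp).mpr hpd)
      have hk2 : k ∣ (s + 2) := hcop.dvd_of_dvd_mul_left hkdvd
      exact hfin _ hk2 (by omega) (by omega)
end

section
/- Let k ≥ 2, n ≥ 1 and s ≥ 0 be integers, and let L be a graph of order n. If there is a k-star decomposition of the join L ∨ K_s, then α(L) ≥ n + s − |E(L ∨ K_s)|/k, where α(L) denotes the independence number of L. -/
/-- if `L ∨ K_s` has a `k`-star decomposition then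
`α(L) ≥ n + s - |E(L ∨ K_s)|/k`. -/
theorem stmt10 {V : Type*} [Fintype V] [DecidableEq V] (k n s : ℕ)
    (hk : 2 ≤ k) (hn : 1 ≤ n) (hV : Fintype.card V = n) (L : SimpleGraph V)
    (hdec : ∃ D, IsStarDecompOn (joinK L s) k D) :
    (n : ℝ) + s - ((joinK L s).edgeSet.ncard : ℝ) / k ≤ indepNumber L := by
  classical
  obtain ⟨D, ⟨⟨hstar, hdisj⟩, hcover⟩⟩ := hdec
  set G := joinK L s with hG
  have hk0 : (k : ℝ) ≠ 0 := by positivity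
  -- each star has exactly k edges
  have hcardstar : ∀ p ∈ D, (starEdges p.1 p.2).card = k := by
    intro p hp
    obtain ⟨hc, hadj⟩ := hstar p hp
    rw [starEdges, Finset.card_image_of_injOn, hc]
    intro v hv w hw hvw
    exact Sym2.congr_right.mp hvw
  set U := D.biUnion (fun p => starEdges p.1 p.2) with hU
  have hedge : G.edgeSet = ↑U := by
    ext e
    simp only [Finset.coe_biUnion, Set.mem_iUnion, Finset.mem_coe, hU]
    constructor
    · intro he
      obtain ⟨p, hp, hep⟩ := hcover e he
      exact ⟨p, hp, hep⟩
    · rintro ⟨p, hp, hep⟩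
      obtain ⟨v, hv, rfl⟩ := Finset.mem_image.mp hep
      exact (hstar p hp).2 v hv
  have hEcard : G.edgeSet.ncard = D.card * k := by
    rw [hedge, Set.ncard_coe_finset, hU, Finset.card_biUnion hdisj]
    rw [Finset.sum_congr rfl hcardstar, Finset.sum_const, smul_eq_mul]
  -- centers
  set C := D.image Prod.fst with hCdef
  have hCD : C.card ≤ D.card := Finset.card_image_le
  set I := (Finset.univ : Finset (V ⊕ Fin s)) \ C with hIdef
  have hIcard : I.card = (n + s) - C.card := by
    rw [hIdef, Finset.card_sdiff_of_subset (Finset.subset_univ C), Finset.card_univ,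
      Fintype.card_sum, hV, Fintype.card_fin]
  -- independence in G
  have hind : ∀ u ∈ I, ∀ v ∈ I, ¬ G.Adj u v := by
    intro u hu v hv hadj
    have he : s(u, v) ∈ G.edgeSet := hadj
    obtain ⟨p, hp, hep⟩ := hcover _ he
    obtain ⟨w, hw, hsym⟩ := Finset.mem_image.mp hep
    have hpC : p.1 ∈ C := Finset.mem_image.mpr ⟨p, hp, rfl⟩
    rcases Sym2.eq_iff.mp hsym with ⟨h1, h2⟩ | ⟨h1, h2⟩
    · exact (Finset.mem_sdiff.mp hu).2 (h1 ▸ hpC)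
    · exact (Finset.mem_sdiff.mp hv).2 (h1 ▸ hpC)
  -- independence number set is bounded above
  have hbdd : BddAbove {m : ℕ | ∃ t : Finset V, t.card = m ∧
      ∀ x ∈ t, ∀ y ∈ t, x ≠ y → ¬ L.Adj x y} := by
    refine ⟨Fintype.card V, ?_⟩
    rintro m ⟨t, rfl, -⟩
    exact Finset.card_le_univ t
  have hmain : I.card ≤ indepNumber L := by
    by_cases hr : ∃ b : Fin s, Sum.inr b ∈ I
    · obtain ⟨b, hb⟩ := hr
      have hI1 : I.card ≤ 1 := by
        refine Finset.card_le_one.mpr (fun u hu v hv => ?_)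
        by_contra huv
        rcases em (u = Sum.inr b) with heq | hub
        · exact hind u hu v hv ⟨huv, fun a b' ha _ => by rw [heq] at ha; simp at ha⟩
        · exact hind u hu (Sum.inr b) hb ⟨hub, fun a b' ha hb' => by simp at hb'⟩
      have : ∃ a : V, True := by
        have : 0 < Fintype.card V := by omega
        obtain ⟨a⟩ := Fintype.card_pos_iff.mp this
        exact ⟨a, trivial⟩
      obtain ⟨a, -⟩ := this
      have h1 : 1 ∈ {m : ℕ | ∃ t : Finset V, t.card = m ∧
          ∀ x ∈ t, ∀ y ∈ t, x ≠ y → ¬ L.Adj x y} := by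
        refine ⟨{a}, Finset.card_singleton a, ?_⟩
        intro x hx y hy hxy
        simp only [Finset.mem_singleton] at hx hy
        exact absurd (hx.trans hy.symm) hxy
      exact le_trans hI1 (le_csSup hbdd h1)
    · push_neg at hr
      set A := Finset.univ.filter (fun a : V => Sum.inl a ∈ I) with hAdef
      have hIA : I = A.image Sum.inl := by
        ext x
        rcases x with a | b
        · simp [hAdef]
        · simp only [Finset.mem_image, hAdef, Finset.mem_filter, Finset.mem_univ,
            true_and]
          constructor
          · intro h; exact absurd h (hr b)
          · rintro ⟨a, -, h⟩; exact absurd h (by simp)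
      have hcardIA : I.card = A.card := by
        rw [hIA, Finset.card_image_of_injective _ Sum.inl_injective]
      have hAmem : A.card ∈ {m : ℕ | ∃ t : Finset V, t.card = m ∧
          ∀ x ∈ t, ∀ y ∈ t, x ≠ y → ¬ L.Adj x y} := by
        refine ⟨A, rfl, fun x hx y hy hxy hL => ?_⟩
        simp only [hAdef, Finset.mem_filter, Finset.mem_univ, true_and] at hx hy
        refine hind _ hx _ hy ⟨by simp [hxy], ?_⟩
        rintro a b ⟨rfl⟩ ⟨rfl⟩
        exact hL
      rw [hcardIA]
      exact le_csSup hbdd hAmem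
  -- arithmetic
  have hCn : C.card ≤ n + s := by
    have := Finset.card_le_univ C
    rwa [Fintype.card_sum, hV, Fintype.card_fin] at this
  have hIr : (I.card : ℝ) = (n + s : ℕ) - C.card := by
    rw [hIcard, Nat.cast_sub hCn]
  have hdiv : (G.edgeSet.ncard : ℝ) / k = D.card := by
    rw [hEcard]; push_cast; field_simp
  rw [hdiv]
  have : (n : ℝ) + s - D.card ≤ I.card := by
    rw [hIr]
    push_cast
    have : (C.card : ℝ) ≤ D.card := Nat.cast_le.mpr hCD
    linarith
  calc (n : ℝ) + s - D.card ≤ I.card := this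
    _ ≤ indepNumber L := Nat.cast_le.mpr hmain
end
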